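/- arXiv:1506.02385 — 7 statements merged into one kernel-verified Lean document; each statement's English description precedes it below -/
import Mathlib

section
/- Let m be a nonnegative Borel measure on (0,∞) with ∫_{(0,∞)} y dm(y) < ∞. Define M₀ ≡ 1 and, for k ≥ 1, M_k(x) = 2k ∫_{(0,∞)} min(x,y) M_{k−1}(y) dm(y). Then every M_k is bounded on (0,∞). Moreover, if there exist C > 0 and an irrational ρ > 0 such that I(x) := ∫_{(0,x)} y dm(y) ≤ C x^ρ for all x ∈ (0,1), then for every k ≥ 0 there exists C_k > 0 such that M_k(x) ≤ C_k x^{min(kρ,1)} for all x ∈ (0,1). Consequently, for any ρ > 0 (not necessarily irrational) with I(x) ≤ C x^ρ on (0,1), there exist an integer k ≥ 1 and C' > 0 such that M_k(x) ≤ C' x for all x ∈ (0,1). -/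
open MeasureTheory Set
open scoped ENNReal

/-- The iterated moment functions `M_k` associated to a measure `m` on `(0,∞)`:
`M₀ ≡ 1` and `M_{k+1}(x) = 2(k+1) ∫_{(0,∞)} min(x,y) M_k(y) dm(y)`. -/
noncomputable def absMoment (m : Measure ℝ) : ℕ → ℝ → ℝ≥0∞
  | 0, _ => 1
  | (k + 1), x =>
      ((2 * (k + 1) : ℕ) : ℝ≥0∞) *
        ∫⁻ y in Ioi (0 : ℝ), ENNReal.ofReal (min x y) * absMoment m k y ∂m


/-- Covering sum bound over dyadic annuli (finite version). -/
lemma dyadic_finsum (m : Measure ℝ) (f : ℝ → ℝ≥0∞) (g : ℕ → ℝ≥0∞)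
    (hg : ∀ j : ℕ, (∫⁻ y in Ioc ((1/2:ℝ)^(j+1)) ((1/2:ℝ)^j), f y ∂m) ≤ g j) :
    ∀ n : ℕ, (∫⁻ y in Ioc ((1/2:ℝ)^n) 1, f y ∂m) ≤ ∑ j ∈ Finset.range n, g j := by
  intro n
  induction n with
  | zero => simp
  | succ n ih =>
      have h1 : ((1/2:ℝ))^(n+1) ≤ (1/2:ℝ)^n := by
        apply pow_le_pow_of_le_one <;> norm_num
      have h2 : ((1/2:ℝ))^n ≤ 1 := by
        apply pow_le_one₀ <;> norm_num
      rw [← Set.Ioc_union_Ioc_eq_Ioc h1 h2]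
      calc (∫⁻ y in Ioc ((1/2:ℝ)^(n+1)) ((1/2:ℝ)^n) ∪ Ioc ((1/2:ℝ)^n) 1, f y ∂m)
          ≤ (∫⁻ y in Ioc ((1/2:ℝ)^(n+1)) ((1/2:ℝ)^n), f y ∂m)
            + (∫⁻ y in Ioc ((1/2:ℝ)^n) 1, f y ∂m) := lintegral_union_le _ _ _
        _ ≤ g n + ∑ j ∈ Finset.range n, g j := add_le_add (hg n) ih
        _ = ∑ j ∈ Finset.range (n+1), g j := by rw [Finset.sum_range_succ, add_comm]

/-- `(0,1)` is covered by the dyadic annuli. -/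
lemma dyadic_cover : Ioo (0:ℝ) 1 ⊆ ⋃ j : ℕ, Ioc ((1/2:ℝ)^(j+1)) ((1/2:ℝ)^j) := by
  classical
  intro y hy
  obtain ⟨n, hn⟩ := exists_pow_lt_of_lt_one hy.1 (by norm_num : (1/2:ℝ) < 1)
  have hP : ∃ j : ℕ, (1/2:ℝ)^(j+1) < y := ⟨n, lt_of_le_of_lt (by
    apply pow_le_pow_of_le_one <;> norm_num) hn⟩
  set j := Nat.find hP with hj
  have hspec : (1/2:ℝ)^(j+1) < y := Nat.find_spec hP
  refine mem_iUnion.2 ⟨j, hspec, ?_⟩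
  rcases Nat.eq_zero_or_pos j with h0 | hpos
  · rw [h0]; simpa using hy.2.le
  · have := Nat.find_min hP (m := j - 1) (by omega)
    push_neg at this
    have h' : y ≤ (1/2:ℝ)^(j - 1 + 1) := this
    have hj1 : j - 1 + 1 = j := Nat.succ_pred_eq_of_pos hpos
    rwa [hj1] at h'


/-- bound on `∫_{A_j} y dm` from `I(x) ≤ C x^ρ`. -/
lemma annulus_bound (m : Measure ℝ)
    (hm : (∫⁻ y in Ioi (0 : ℝ), ENNReal.ofReal y ∂m) < ⊤)
    {C ρ : ℝ} (hC : 0 < C) (hρ : 0 < ρ)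
    (hI : ∀ x ∈ Ioo (0 : ℝ) 1,
      (∫⁻ z in Ioo (0 : ℝ) x, ENNReal.ofReal z ∂m) ≤ ENNReal.ofReal (C * x ^ ρ)) :
    ∃ D : ℝ, 0 < D ∧ ∀ j : ℕ,
      (∫⁻ y in Ioc ((1/2:ℝ)^(j+1)) ((1/2:ℝ)^j), ENNReal.ofReal y ∂m)
        ≤ ENNReal.ofReal (D * ((1/2:ℝ) ^ ρ)^j) := by
  set J := (∫⁻ y in Ioi (0 : ℝ), ENNReal.ofReal y ∂m) with hJ
  set D : ℝ := max (C * (3/2 : ℝ) ^ ρ) (J.toReal + 1) with hD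
  have hD0 : 0 < D := lt_of_lt_of_le (by positivity) (le_max_left _ _)
  refine ⟨D, hD0, fun j => ?_⟩
  rcases j with _ | i
  · -- j = 0 : Ioc (1/2) 1 ⊆ Ioi 0, use J
    have hsub : Ioc ((1/2:ℝ)^(0+1)) ((1/2:ℝ)^0) ⊆ Ioi (0:ℝ) := by
      intro y hy
      have : (0:ℝ) < (1/2:ℝ)^(0+1) := by norm_num
      exact lt_trans this hy.1
    calc (∫⁻ y in Ioc ((1/2:ℝ)^(0+1)) ((1/2:ℝ)^0), ENNReal.ofReal y ∂m)
        ≤ J := lintegral_mono_set hsub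
      _ = ENNReal.ofReal J.toReal := (ENNReal.ofReal_toReal hm.ne).symm
      _ ≤ ENNReal.ofReal (D * ((1/2:ℝ) ^ ρ)^0) := by
          apply ENNReal.ofReal_le_ofReal
          have : J.toReal + 1 ≤ D := le_max_right _ _
          simp only [pow_zero, mul_one]
          linarith
  · -- j = i+1 : use hI with t = (3/2)*(1/2)^(i+1)
    set j := i + 1
    set t : ℝ := (3/2) * (1/2:ℝ)^j with ht
    have htpos : 0 < t := by positivity
    have ht1 : t < 1 := by
      have : (1/2:ℝ)^j ≤ (1/2:ℝ)^1 := by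
        apply pow_le_pow_of_le_one (by norm_num) (by norm_num)
        omega
      rw [ht]; nlinarith
    have hsub : Ioc ((1/2:ℝ)^(j+1)) ((1/2:ℝ)^j) ⊆ Ioo (0:ℝ) t := by
      intro y hy
      constructor
      · have : (0:ℝ) < (1/2:ℝ)^(j+1) := by positivity
        linarith [hy.1]
      · have h2 : (1/2:ℝ)^j < t := by
          rw [ht]
          nlinarith [pow_pos (by norm_num : (0:ℝ) < 1/2) j]
        exact lt_of_le_of_lt hy.2 h2
    have key : (∫⁻ y in Ioc ((1/2:ℝ)^(j+1)) ((1/2:ℝ)^j), ENNReal.ofReal y ∂m)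
        ≤ ENNReal.ofReal (C * t ^ ρ) :=
      le_trans (lintegral_mono_set hsub) (hI t ⟨htpos, ht1⟩)
    refine le_trans key (ENNReal.ofReal_le_ofReal ?_)
    have hhalf : ((1/2:ℝ)^j : ℝ) ^ ρ = ((1/2:ℝ) ^ ρ)^j := by
      rw [← Real.rpow_natCast ((1/2:ℝ)) j, ← Real.rpow_mul (by norm_num),
        mul_comm, Real.rpow_mul (by norm_num), Real.rpow_natCast]
    have : C * t ^ ρ = (C * (3/2:ℝ) ^ ρ) * ((1/2:ℝ) ^ ρ)^j := by
      rw [ht, Real.mul_rpow (by norm_num) (by positivity), hhalf]; ring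
    rw [this]
    apply mul_le_mul_of_nonneg_right (le_max_left _ _) (by positivity)


lemma npow_rpow_swap {a : ℝ} (ha : 0 ≤ a) (n : ℕ) (b : ℝ) :
    ((a ^ n : ℝ)) ^ b = (a ^ b) ^ n := by
  rw [← Real.rpow_natCast a n, ← Real.rpow_mul ha, mul_comm, Real.rpow_mul ha,
    Real.rpow_natCast]

lemma annulus_fbound (m : Measure ℝ) {β D q : ℝ} (hβ : β ≤ 0) (hD : 0 ≤ D) (hq : 0 ≤ q)
    (hann : ∀ j : ℕ,
      (∫⁻ y in Ioc ((1/2:ℝ)^(j+1)) ((1/2:ℝ)^j), ENNReal.ofReal y ∂m)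
        ≤ ENNReal.ofReal (D * q^j)) :
    ∀ j : ℕ,
      (∫⁻ y in Ioc ((1/2:ℝ)^(j+1)) ((1/2:ℝ)^j), ENNReal.ofReal (y ^ β * y) ∂m)
        ≤ ENNReal.ofReal ((((1/2:ℝ) ^ β) * D) * ((((1/2:ℝ) ^ β)) * q)^j) := by
  intro j
  set p : ℝ := (1/2:ℝ) ^ β with hp
  have hp1 : 1 ≤ p := Real.one_le_rpow_of_pos_of_le_one_of_nonpos (by norm_num) (by norm_num) hβ
  have hp0 : 0 ≤ p := le_trans zero_le_one hp1
  have step1 : (∫⁻ y in Ioc ((1/2:ℝ)^(j+1)) ((1/2:ℝ)^j), ENNReal.ofReal (y ^ β * y) ∂m)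
      ≤ ∫⁻ y in Ioc ((1/2:ℝ)^(j+1)) ((1/2:ℝ)^j),
          ENNReal.ofReal (p ^ (j+1)) * ENNReal.ofReal y ∂m := by
    apply setLIntegral_mono' measurableSet_Ioc
    intro y hy
    have hy0 : (0:ℝ) < y := lt_trans (by positivity) hy.1
    have hyβ : y ^ β ≤ p ^ (j+1) := by
      have h1 : ((1/2:ℝ)^(j+1) : ℝ) ^ β = p ^ (j+1) := npow_rpow_swap (by norm_num) _ _
      rw [← h1]
      exact Real.rpow_le_rpow_of_nonpos (by positivity) hy.1.le hβ
    calc ENNReal.ofReal (y ^ β * y) ≤ ENNReal.ofReal (p ^ (j+1) * y) := by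
          apply ENNReal.ofReal_le_ofReal
          exact mul_le_mul_of_nonneg_right hyβ hy0.le
      _ = ENNReal.ofReal (p ^ (j+1)) * ENNReal.ofReal y := ENNReal.ofReal_mul (by positivity)
  have step2 : (∫⁻ y in Ioc ((1/2:ℝ)^(j+1)) ((1/2:ℝ)^j),
      ENNReal.ofReal (p ^ (j+1)) * ENNReal.ofReal y ∂m)
      = ENNReal.ofReal (p ^ (j+1)) *
        ∫⁻ y in Ioc ((1/2:ℝ)^(j+1)) ((1/2:ℝ)^j), ENNReal.ofReal y ∂m :=
    lintegral_const_mul' _ _ ENNReal.ofReal_ne_top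
  calc (∫⁻ y in Ioc ((1/2:ℝ)^(j+1)) ((1/2:ℝ)^j), ENNReal.ofReal (y ^ β * y) ∂m)
      ≤ ENNReal.ofReal (p ^ (j+1)) *
        ∫⁻ y in Ioc ((1/2:ℝ)^(j+1)) ((1/2:ℝ)^j), ENNReal.ofReal y ∂m := by
        rw [← step2]; exact step1
    _ ≤ ENNReal.ofReal (p ^ (j+1)) * ENNReal.ofReal (D * q^j) := by
        exact mul_le_mul_right (hann j) _
    _ = ENNReal.ofReal ((p * D) * (p * q)^j) := by
        rw [← ENNReal.ofReal_mul (by positivity)]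
        congr 1
        rw [mul_pow]; ring


lemma absMoment_bdd (m : Measure ℝ)
    (hm : (∫⁻ y in Ioi (0 : ℝ), ENNReal.ofReal y ∂m) < ⊤) :
    ∀ k : ℕ, ∃ B : ℝ≥0∞, B ≠ ⊤ ∧ ∀ x : ℝ, absMoment m k x ≤ B := by
  intro k
  induction k with
  | zero => exact ⟨1, ENNReal.one_ne_top, fun x => le_rfl⟩
  | succ k ih =>
      obtain ⟨B, hB, hBle⟩ := ih
      refine ⟨((2 * (k + 1) : ℕ) : ℝ≥0∞) *
        ((∫⁻ y in Ioi (0 : ℝ), ENNReal.ofReal y ∂m) * B), ?_, ?_⟩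
      · exact ENNReal.mul_ne_top (ENNReal.natCast_ne_top _) (ENNReal.mul_ne_top hm.ne hB)
      · intro x
        show ((2 * (k + 1) : ℕ) : ℝ≥0∞) * _ ≤ _
        apply mul_le_mul_right
        calc (∫⁻ y in Ioi (0 : ℝ), ENNReal.ofReal (min x y) * absMoment m k y ∂m)
            ≤ ∫⁻ y in Ioi (0 : ℝ), ENNReal.ofReal y * B ∂m := by
              apply lintegral_mono
              intro y
              exact mul_le_mul' (ENNReal.ofReal_le_ofReal (min_le_right _ _)) (hBle y)
          _ = (∫⁻ y in Ioi (0 : ℝ), ENNReal.ofReal y ∂m) * B :=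
              lintegral_mul_const' _ _ hB


lemma pow_int_A (m : Measure ℝ) {β ρ D : ℝ} (hβ : β ≤ 0) (hρ : 0 < ρ) (hβρ : 0 < β + ρ)
    (hD : 0 ≤ D)
    (hann : ∀ j : ℕ,
      (∫⁻ y in Ioc ((1/2:ℝ)^(j+1)) ((1/2:ℝ)^j), ENNReal.ofReal y ∂m)
        ≤ ENNReal.ofReal (D * ((1/2:ℝ) ^ ρ)^j)) :
    ∃ K : ℝ, 0 < K ∧
      (∫⁻ y in Ioo (0:ℝ) 1, ENNReal.ofReal (y ^ β * y) ∂m) ≤ ENNReal.ofReal K := by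
  set p : ℝ := (1/2:ℝ) ^ β with hp
  set q : ℝ := (1/2:ℝ) ^ ρ with hq
  have hq0 : 0 ≤ q := Real.rpow_nonneg (by norm_num) _
  have hp0 : 0 ≤ p := Real.rpow_nonneg (by norm_num) _
  have ht : p * q = (1/2:ℝ) ^ (β + ρ) := (Real.rpow_add (by norm_num) _ _).symm
  have ht1 : p * q < 1 := by rw [ht]; exact Real.rpow_lt_one (by norm_num) (by norm_num) hβρ
  have ht0 : 0 ≤ p * q := mul_nonneg hp0 hq0
  set c : ℝ := p * D with hc
  have hc0 : 0 ≤ c := mul_nonneg hp0 hD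
  have hfb := annulus_fbound m hβ hD hq0 hann
  have hE : (∫⁻ y in Ioo (0:ℝ) 1, ENNReal.ofReal (y ^ β * y) ∂m)
      ≤ ENNReal.ofReal c * (1 - ENNReal.ofReal (p*q))⁻¹ := by
    calc (∫⁻ y in Ioo (0:ℝ) 1, ENNReal.ofReal (y ^ β * y) ∂m)
        ≤ ∫⁻ y in ⋃ j : ℕ, Ioc ((1/2:ℝ)^(j+1)) ((1/2:ℝ)^j),
            ENNReal.ofReal (y ^ β * y) ∂m := lintegral_mono_set dyadic_cover
      _ ≤ ∑' j : ℕ, ∫⁻ y in Ioc ((1/2:ℝ)^(j+1)) ((1/2:ℝ)^j),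
            ENNReal.ofReal (y ^ β * y) ∂m := lintegral_iUnion_le _ _
      _ ≤ ∑' j : ℕ, ENNReal.ofReal (c * (p*q)^j) := ENNReal.tsum_le_tsum (fun j => hfb j)
      _ = ∑' j : ℕ, ENNReal.ofReal c * (ENNReal.ofReal (p*q))^j := by
          congr 1; funext j
          rw [ENNReal.ofReal_mul hc0, ENNReal.ofReal_pow ht0]
      _ = ENNReal.ofReal c * (1 - ENNReal.ofReal (p*q))⁻¹ := by
          rw [ENNReal.tsum_mul_left, ENNReal.tsum_geometric]
  set E : ℝ≥0∞ := ENNReal.ofReal c * (1 - ENNReal.ofReal (p*q))⁻¹ with hEdef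
  have hEne : E ≠ ⊤ := by
    have h0 : (1:ℝ≥0∞) - ENNReal.ofReal (p*q) ≠ 0 := by
      intro h
      rw [tsub_eq_zero_iff_le] at h
      exact absurd h (not_le.2 (ENNReal.ofReal_lt_one.2 ht1))
    exact ENNReal.mul_ne_top ENNReal.ofReal_ne_top (ENNReal.inv_ne_top.2 h0)
  refine ⟨E.toReal + 1, by positivity, ?_⟩
  calc (∫⁻ y in Ioo (0:ℝ) 1, ENNReal.ofReal (y ^ β * y) ∂m) ≤ E := hE
    _ = ENNReal.ofReal E.toReal := (ENNReal.ofReal_toReal hEne).symm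
    _ ≤ ENNReal.ofReal (E.toReal + 1) := ENNReal.ofReal_le_ofReal (by linarith)

lemma pow_int_B (m : Measure ℝ) {β ρ D : ℝ} (hβ : β ≤ 0) (hρ : 0 < ρ) (hβρ : β + ρ < 0)
    (hD : 0 ≤ D)
    (hann : ∀ j : ℕ,
      (∫⁻ y in Ioc ((1/2:ℝ)^(j+1)) ((1/2:ℝ)^j), ENNReal.ofReal y ∂m)
        ≤ ENNReal.ofReal (D * ((1/2:ℝ) ^ ρ)^j)) :
    ∃ K : ℝ, 0 < K ∧ ∀ x ∈ Ioo (0:ℝ) 1,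
      (∫⁻ y in Ioo x 1, ENNReal.ofReal (y ^ β * y) ∂m)
        ≤ ENNReal.ofReal (K * x ^ (β + ρ)) := by
  classical
  set p : ℝ := (1/2:ℝ) ^ β with hp
  set q : ℝ := (1/2:ℝ) ^ ρ with hq
  have hq0 : 0 ≤ q := Real.rpow_nonneg (by norm_num) _
  have hp0 : 0 ≤ p := Real.rpow_nonneg (by norm_num) _
  set t : ℝ := p * q with htdef
  have ht : t = (1/2:ℝ) ^ (β + ρ) := (Real.rpow_add (by norm_num) _ _).symm
  have ht1 : 1 < t := by
    rw [ht]
    exact (Real.one_lt_rpow_iff_of_pos (by norm_num)).2 (Or.inr ⟨by norm_num, hβρ⟩)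
  set c : ℝ := p * D with hc
  have hc0 : 0 ≤ c := mul_nonneg hp0 hD
  have hfb := annulus_fbound m hβ hD hq0 hann
  have hK0 : 0 ≤ c * t / (t - 1) := div_nonneg (by positivity) (by linarith)
  refine ⟨c * t / (t - 1) + 1, by linarith, ?_⟩
  intro x hx
  -- minimal n with (1/2)^n < x
  have hP : ∃ n : ℕ, (1/2:ℝ)^n < x := exists_pow_lt_of_lt_one hx.1 (by norm_num)
  set n := Nat.find hP with hn
  have hspec : (1/2:ℝ)^n < x := Nat.find_spec hP
  have hnpos : 0 < n := by
    rcases Nat.eq_zero_or_pos n with h0 | h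
    · exfalso; rw [h0] at hspec; norm_num at hspec; linarith [hx.2]
    · exact h
  have hprev : x ≤ (1/2:ℝ)^(n-1) := by
    have := Nat.find_min hP (m := n - 1) (by omega)
    push_neg at this; exact this
  have hx2a : x ≤ 2 * (1/2:ℝ)^n := by
    have : (1/2:ℝ)^(n-1) = 2 * (1/2:ℝ)^n := by
      have h1 : n - 1 + 1 = n := Nat.succ_pred_eq_of_pos hnpos
      have h2 : (1/2:ℝ)^n = (1/2:ℝ)^(n-1) * (1/2) := by rw [← pow_succ, h1]
      rw [h2]; ring
    linarith [hprev, this ▸ hprev]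
  have hsub : Ioo x 1 ⊆ Ioc ((1/2:ℝ)^n) 1 :=
    fun y hy => ⟨lt_trans hspec hy.1, hy.2.le⟩
  have hsum := dyadic_finsum m (fun y => ENNReal.ofReal (y ^ β * y))
    (fun j => ENNReal.ofReal (c * t^j)) (fun j => hfb j) n
  have htn : t ^ n ≤ t * x ^ (β + ρ) := by
    have h1 : t ^ n = ((1/2:ℝ)^n : ℝ) ^ (β + ρ) := by
      rw [npow_rpow_swap (by norm_num : (0:ℝ) ≤ 1/2) n (β+ρ), ← ht]
    have h2 : ((1/2:ℝ)^n : ℝ) ^ (β + ρ) ≤ (x / 2) ^ (β + ρ) := by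
      apply Real.rpow_le_rpow_of_nonpos (by linarith [hx.1]) (by linarith) hβρ.le
    have h3 : (x / 2 : ℝ) ^ (β + ρ) = x ^ (β + ρ) * t := by
      rw [show (x/2 : ℝ) = x * (1/2) by ring,
        Real.mul_rpow hx.1.le (by norm_num), ← ht]
    rw [h1]; rw [h3] at h2; linarith
  have hreal : ∑ j ∈ Finset.range n, c * t^j ≤ (c * t / (t - 1) + 1) * x ^ (β + ρ) := by
    have hxp : 0 < x ^ (β + ρ) := Real.rpow_pos_of_pos hx.1 _
    have hgeom : ∑ j ∈ Finset.range n, t^j = (t^n - 1) / (t - 1) :=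
      geom_sum_eq (by linarith) n
    have h5 : ∑ j ∈ Finset.range n, c * t^j = c * ((t^n - 1) / (t - 1)) := by
      rw [← Finset.mul_sum, hgeom]
    have h6 : (t^n - 1) / (t - 1) ≤ (t * x ^ (β+ρ)) / (t - 1) :=
      (div_le_div_iff_of_pos_right (by linarith)).2 (by linarith [htn])
    have h7 : c * ((t^n - 1) / (t - 1)) ≤ c * ((t * x ^ (β+ρ)) / (t - 1)) :=
      mul_le_mul_of_nonneg_left h6 hc0
    have h8 : c * ((t * x ^ (β+ρ)) / (t - 1)) = (c * t / (t - 1)) * x ^ (β+ρ) := by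
      ring
    have h9 : (c * t / (t - 1)) * x ^ (β+ρ) ≤ (c * t / (t - 1) + 1) * x ^ (β+ρ) :=
      mul_le_mul_of_nonneg_right (by linarith) hxp.le
    rw [h5]
    linarith [h7, h8 ▸ h7]
  calc (∫⁻ y in Ioo x 1, ENNReal.ofReal (y ^ β * y) ∂m)
      ≤ ∫⁻ y in Ioc ((1/2:ℝ)^n) 1, ENNReal.ofReal (y ^ β * y) ∂m :=
        lintegral_mono_set hsub
    _ ≤ ∑ j ∈ Finset.range n, ENNReal.ofReal (c * t^j) := hsum
    _ = ENNReal.ofReal (∑ j ∈ Finset.range n, c * t^j) := by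
        rw [ENNReal.ofReal_sum_of_nonneg]
        intro j _
        exact mul_nonneg hc0 (pow_nonneg (by linarith) j)
    _ ≤ ENNReal.ofReal ((c * t / (t - 1) + 1) * x ^ (β + ρ)) :=
        ENNReal.ofReal_le_ofReal hreal


lemma key_est (m : Measure ℝ)
    (hm : (∫⁻ y in Ioi (0 : ℝ), ENNReal.ofReal y ∂m) < ⊤)
    {C ρ : ℝ} (hC : 0 < C) (hρ : 0 < ρ)
    (hI : ∀ x ∈ Ioo (0 : ℝ) 1,
      (∫⁻ z in Ioo (0 : ℝ) x, ENNReal.ofReal z ∂m) ≤ ENNReal.ofReal (C * x ^ ρ))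
    {α : ℝ} (h0α : 0 ≤ α) (hα1 : α ≤ 1) (hne : α + ρ ≠ 1) :
    ∃ K : ℝ, 0 < K ∧ ∀ x ∈ Ioo (0:ℝ) 1,
      (∫⁻ y in Ioo (0:ℝ) 1, ENNReal.ofReal (min x y) * ENNReal.ofReal (y ^ α) ∂m)
        ≤ ENNReal.ofReal (K * x ^ (min (α + ρ) 1)) := by
  obtain ⟨D, hD0, hann⟩ := annulus_bound m hm hC hρ hI
  have hβ : α - 1 ≤ 0 := by linarith
  have hsplit : ∀ y : ℝ, 0 < y → y ^ α = y ^ (α - 1) * y := by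
    intro y hy
    rw [← Real.rpow_add_one (ne_of_gt hy) (α - 1), sub_add_cancel]
  rcases lt_or_gt_of_ne hne with hlt | hgt
  · -- α + ρ < 1
    obtain ⟨KB, hKB0, hKB⟩ := pow_int_B m hβ hρ (by linarith : (α - 1) + ρ < 0) hD0.le hann
    refine ⟨C * (2:ℝ) ^ ρ + KB, by positivity, ?_⟩
    intro x hx
    have hmin : min (α + ρ) 1 = α + ρ := min_eq_left hlt.le
    rw [hmin]
    have hsetsplit : Ioc (0:ℝ) x ∪ Ioo x 1 = Ioo (0:ℝ) 1 :=
      Set.Ioc_union_Ioo_eq_Ioo (le_of_lt hx.1) hx.2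
    -- T1 : over Ioc 0 x
    have hT1 : (∫⁻ y in Ioc (0:ℝ) x, ENNReal.ofReal (min x y) * ENNReal.ofReal (y ^ α) ∂m)
        ≤ ENNReal.ofReal ((C * (2:ℝ) ^ ρ) * x ^ (α + ρ)) := by
      have hpt : ∀ y ∈ Ioc (0:ℝ) x,
          ENNReal.ofReal (min x y) * ENNReal.ofReal (y ^ α)
            ≤ ENNReal.ofReal (x ^ α) * ENNReal.ofReal y := by
        intro y hy
        rw [mul_comm (ENNReal.ofReal (x ^ α))]
        exact mul_le_mul' (ENNReal.ofReal_le_ofReal (min_le_right _ _))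
          (ENNReal.ofReal_le_ofReal (Real.rpow_le_rpow hy.1.le hy.2 h0α))
      set tt : ℝ := min (2*x) ((x+1)/2) with htt
      have htt0 : 0 < tt := lt_min (by linarith [hx.1]) (by linarith [hx.1])
      have htt1 : tt < 1 := lt_of_le_of_lt (min_le_right _ _) (by linarith [hx.2])
      have httx : Ioc (0:ℝ) x ⊆ Ioo (0:ℝ) tt := by
        intro y hy
        exact ⟨hy.1, lt_of_le_of_lt hy.2 (lt_min (by linarith [hx.1]) (by linarith [hx.2]))⟩
      calc (∫⁻ y in Ioc (0:ℝ) x, ENNReal.ofReal (min x y) * ENNReal.ofReal (y ^ α) ∂m)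
          ≤ ∫⁻ y in Ioc (0:ℝ) x, ENNReal.ofReal (x ^ α) * ENNReal.ofReal y ∂m :=
            setLIntegral_mono' measurableSet_Ioc hpt
        _ = ENNReal.ofReal (x ^ α) * ∫⁻ y in Ioc (0:ℝ) x, ENNReal.ofReal y ∂m :=
            lintegral_const_mul' _ _ ENNReal.ofReal_ne_top
        _ ≤ ENNReal.ofReal (x ^ α) * ENNReal.ofReal (C * tt ^ ρ) :=
            mul_le_mul_right (le_trans (lintegral_mono_set httx) (hI tt ⟨htt0, htt1⟩)) _
        _ ≤ ENNReal.ofReal (x ^ α) * ENNReal.ofReal (C * (2*x) ^ ρ) := by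
            apply mul_le_mul_right
            apply ENNReal.ofReal_le_ofReal
            exact mul_le_mul_of_nonneg_left
              (Real.rpow_le_rpow htt0.le (min_le_left _ _) hρ.le) hC.le
        _ = ENNReal.ofReal ((C * (2:ℝ) ^ ρ) * x ^ (α + ρ)) := by
            rw [← ENNReal.ofReal_mul (Real.rpow_nonneg hx.1.le _)]
            congr 1
            rw [Real.mul_rpow (by norm_num) hx.1.le, Real.rpow_add hx.1]
            ring
    -- T2 : over Ioo x 1
    have hT2 : (∫⁻ y in Ioo x 1, ENNReal.ofReal (min x y) * ENNReal.ofReal (y ^ α) ∂m)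
        ≤ ENNReal.ofReal (KB * x ^ (α + ρ)) := by
      have hpt : ∀ y ∈ Ioo x 1,
          ENNReal.ofReal (min x y) * ENNReal.ofReal (y ^ α)
            ≤ ENNReal.ofReal x * ENNReal.ofReal (y ^ (α-1) * y) := by
        intro y hy
        have hy0 : 0 < y := lt_trans hx.1 hy.1
        rw [← hsplit y hy0]
        exact mul_le_mul' (ENNReal.ofReal_le_ofReal (min_le_left _ _)) le_rfl
      calc (∫⁻ y in Ioo x 1, ENNReal.ofReal (min x y) * ENNReal.ofReal (y ^ α) ∂m)
          ≤ ∫⁻ y in Ioo x 1, ENNReal.ofReal x * ENNReal.ofReal (y ^ (α-1) * y) ∂m :=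
            setLIntegral_mono' measurableSet_Ioo hpt
        _ = ENNReal.ofReal x * ∫⁻ y in Ioo x 1, ENNReal.ofReal (y ^ (α-1) * y) ∂m :=
            lintegral_const_mul' _ _ ENNReal.ofReal_ne_top
        _ ≤ ENNReal.ofReal x * ENNReal.ofReal (KB * x ^ (α - 1 + ρ)) :=
            mul_le_mul_right (hKB x hx) _
        _ = ENNReal.ofReal (KB * x ^ (α + ρ)) := by
            rw [← ENNReal.ofReal_mul hx.1.le]
            congr 1
            have : x * x ^ (α - 1 + ρ) = x ^ (α + ρ) := by
              rw [show α + ρ = (α - 1 + ρ) + 1 by ring,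
                Real.rpow_add_one (ne_of_gt hx.1)]
              ring
            rw [← this]; ring
    calc (∫⁻ y in Ioo (0:ℝ) 1, ENNReal.ofReal (min x y) * ENNReal.ofReal (y ^ α) ∂m)
        = ∫⁻ y in Ioc (0:ℝ) x ∪ Ioo x 1,
            ENNReal.ofReal (min x y) * ENNReal.ofReal (y ^ α) ∂m := by rw [hsetsplit]
      _ ≤ _ + _ := lintegral_union_le _ _ _
      _ ≤ ENNReal.ofReal ((C * (2:ℝ) ^ ρ) * x ^ (α + ρ)) + ENNReal.ofReal (KB * x ^ (α + ρ)) :=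
          add_le_add hT1 hT2
      _ = ENNReal.ofReal ((C * (2:ℝ) ^ ρ + KB) * x ^ (α + ρ)) := by
          have hxp : 0 ≤ x ^ (α + ρ) := Real.rpow_nonneg hx.1.le _
          rw [← ENNReal.ofReal_add (mul_nonneg (by positivity) hxp)
            (mul_nonneg hKB0.le hxp)]
          congr 1; ring
  · -- α + ρ > 1
    obtain ⟨KA, hKA0, hKA⟩ := pow_int_A m hβ hρ (by linarith : 0 < (α - 1) + ρ) hD0.le hann
    refine ⟨KA, hKA0, ?_⟩
    intro x hx
    have hmin : min (α + ρ) 1 = 1 := min_eq_right hgt.le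
    rw [hmin, Real.rpow_one]
    have hpt : ∀ y ∈ Ioo (0:ℝ) 1,
        ENNReal.ofReal (min x y) * ENNReal.ofReal (y ^ α)
          ≤ ENNReal.ofReal x * ENNReal.ofReal (y ^ (α-1) * y) := by
      intro y hy
      rw [← hsplit y hy.1]
      exact mul_le_mul' (ENNReal.ofReal_le_ofReal (min_le_left _ _)) le_rfl
    calc (∫⁻ y in Ioo (0:ℝ) 1, ENNReal.ofReal (min x y) * ENNReal.ofReal (y ^ α) ∂m)
        ≤ ∫⁻ y in Ioo (0:ℝ) 1, ENNReal.ofReal x * ENNReal.ofReal (y ^ (α-1) * y) ∂m :=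
          setLIntegral_mono' measurableSet_Ioo hpt
      _ = ENNReal.ofReal x * ∫⁻ y in Ioo (0:ℝ) 1, ENNReal.ofReal (y ^ (α-1) * y) ∂m :=
          lintegral_const_mul' _ _ ENNReal.ofReal_ne_top
      _ ≤ ENNReal.ofReal x * ENNReal.ofReal KA := mul_le_mul_right hKA _
      _ = ENNReal.ofReal (KA * x) := by
          rw [← ENNReal.ofReal_mul hx.1.le]; congr 1; ring


lemma moment_est (m : Measure ℝ)
    (hm : (∫⁻ y in Ioi (0 : ℝ), ENNReal.ofReal y ∂m) < ⊤)
    {C ρ : ℝ} (hC : 0 < C) (hρ : 0 < ρ) (hirr : Irrational ρ)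
    (hI : ∀ x ∈ Ioo (0 : ℝ) 1,
      (∫⁻ z in Ioo (0 : ℝ) x, ENNReal.ofReal z ∂m) ≤ ENNReal.ofReal (C * x ^ ρ)) :
    ∀ k : ℕ, ∃ Ck : ℝ, 0 < Ck ∧ ∀ x ∈ Ioo (0 : ℝ) 1,
      absMoment m k x ≤ ENNReal.ofReal (Ck * x ^ (min ((k : ℝ) * ρ) 1)) := by
  intro k
  induction k with
  | zero =>
      refine ⟨1, one_pos, fun x hx => ?_⟩
      have h0 : min (((0:ℕ) : ℝ) * ρ) 1 = 0 := by norm_num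
      rw [h0, Real.rpow_zero, mul_one, ENNReal.ofReal_one]
      exact le_rfl
  | succ k ih =>
      obtain ⟨Ck, hCk0, hCk⟩ := ih
      set α : ℝ := min ((k : ℝ) * ρ) 1 with hα
      have h0α : 0 ≤ α := le_min (by positivity) zero_le_one
      have hα1 : α ≤ 1 := min_le_right _ _
      have hne : α + ρ ≠ 1 := by
        rcases le_or_gt 1 ((k : ℝ) * ρ) with h | h
        · have hα' : α = 1 := min_eq_right h
          rw [hα']; intro hc; linarith
        · have hα' : α = (k : ℝ) * ρ := min_eq_left h.le
          rw [hα']; intro hc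
          have h1 : ((k + 1 : ℕ) : ℝ) * ρ = 1 := by push_cast; linarith
          have h2 : Irrational (((k + 1 : ℕ) : ℝ) * ρ) := hirr.natCast_mul (by omega)
          exact h2 ⟨1, by rw [h1]; norm_num⟩
      obtain ⟨K, hK0, hKest⟩ := key_est m hm hC hρ hI h0α hα1 hne
      obtain ⟨B, hBtop, hBle⟩ := absMoment_bdd m hm k
      set J := (∫⁻ y in Ioi (0 : ℝ), ENNReal.ofReal y ∂m) with hJ
      have hEtop : B * J ≠ ⊤ := ENNReal.mul_ne_top hBtop hm.ne
      set D : ℝ := (B * J).toReal with hD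
      have hD0 : 0 ≤ D := ENNReal.toReal_nonneg
      -- exponent bookkeeping
      have hγ : min (α + ρ) 1 = min (((k+1 : ℕ) : ℝ) * ρ) 1 := by
        rcases le_or_gt 1 ((k : ℝ) * ρ) with h | h
        · have hα' : α = 1 := min_eq_right h
          rw [hα', min_eq_right (by linarith : (1:ℝ) ≤ 1 + ρ),
            min_eq_right (by push_cast; nlinarith : (1:ℝ) ≤ ((k+1 : ℕ) : ℝ) * ρ)]
        · have hα' : α = (k : ℝ) * ρ := min_eq_left h.le
          rw [hα']
          congr 1
          push_cast; ring
      refine ⟨((2 * (k + 1) : ℕ) : ℝ) * (Ck * K + D), by positivity, ?_⟩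
      intro x hx
      set γ : ℝ := min (((k+1 : ℕ) : ℝ) * ρ) 1 with hγdef
      have hγ1 : γ ≤ 1 := min_le_right _ _
      have hxγ : x ≤ x ^ γ := by
        have := Real.rpow_le_rpow_of_exponent_ge hx.1 hx.2.le hγ1
        rwa [Real.rpow_one] at this
      have hxγ0 : 0 ≤ x ^ γ := Real.rpow_nonneg hx.1.le _
      -- piece 1
      have hP1 : (∫⁻ y in Ioo (0:ℝ) 1, ENNReal.ofReal (min x y) * absMoment m k y ∂m)
          ≤ ENNReal.ofReal ((Ck * K) * x ^ γ) := by
        calc (∫⁻ y in Ioo (0:ℝ) 1, ENNReal.ofReal (min x y) * absMoment m k y ∂m)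
            ≤ ∫⁻ y in Ioo (0:ℝ) 1,
                ENNReal.ofReal Ck * (ENNReal.ofReal (min x y) * ENNReal.ofReal (y ^ α)) ∂m := by
              apply setLIntegral_mono' measurableSet_Ioo
              intro y hy
              have h1 : absMoment m k y ≤ ENNReal.ofReal Ck * ENNReal.ofReal (y ^ α) := by
                rw [← ENNReal.ofReal_mul hCk0.le]
                exact hCk y hy
              calc ENNReal.ofReal (min x y) * absMoment m k y
                  ≤ ENNReal.ofReal (min x y) * (ENNReal.ofReal Ck * ENNReal.ofReal (y ^ α)) :=
                    mul_le_mul' le_rfl h1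
                _ = ENNReal.ofReal Ck * (ENNReal.ofReal (min x y) * ENNReal.ofReal (y ^ α)) := by
                    ring
          _ = ENNReal.ofReal Ck *
              ∫⁻ y in Ioo (0:ℝ) 1, ENNReal.ofReal (min x y) * ENNReal.ofReal (y ^ α) ∂m :=
              lintegral_const_mul' _ _ ENNReal.ofReal_ne_top
          _ ≤ ENNReal.ofReal Ck * ENNReal.ofReal (K * x ^ (min (α + ρ) 1)) :=
              mul_le_mul_right (hKest x hx) _
          _ = ENNReal.ofReal ((Ck * K) * x ^ γ) := by
              rw [hγ, ← ENNReal.ofReal_mul hCk0.le]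
              congr 1; ring
      -- piece 2
      have hP2 : (∫⁻ y in Ici (1:ℝ), ENNReal.ofReal (min x y) * absMoment m k y ∂m)
          ≤ ENNReal.ofReal (D * x ^ γ) := by
        have hc_ne : ENNReal.ofReal x * B ≠ ⊤ :=
          ENNReal.mul_ne_top ENNReal.ofReal_ne_top hBtop
        calc (∫⁻ y in Ici (1:ℝ), ENNReal.ofReal (min x y) * absMoment m k y ∂m)
            ≤ ∫⁻ y in Ici (1:ℝ), (ENNReal.ofReal x * B) * ENNReal.ofReal y ∂m := by
              apply setLIntegral_mono' measurableSet_Ici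
              intro y hy
              have h1 : ENNReal.ofReal (min x y) ≤ ENNReal.ofReal x :=
                ENNReal.ofReal_le_ofReal (min_le_left _ _)
              have h2 : absMoment m k y ≤ B * ENNReal.ofReal y := by
                calc absMoment m k y ≤ B := hBle y
                  _ = B * 1 := (mul_one B).symm
                  _ ≤ B * ENNReal.ofReal y := by
                      apply mul_le_mul_right
                      rw [← ENNReal.ofReal_one]
                      exact ENNReal.ofReal_le_ofReal hy
              calc ENNReal.ofReal (min x y) * absMoment m k y
                  ≤ ENNReal.ofReal x * (B * ENNReal.ofReal y) := mul_le_mul' h1 h2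
                _ = (ENNReal.ofReal x * B) * ENNReal.ofReal y := by ring
          _ = (ENNReal.ofReal x * B) * ∫⁻ y in Ici (1:ℝ), ENNReal.ofReal y ∂m :=
              lintegral_const_mul' _ _ hc_ne
          _ ≤ (ENNReal.ofReal x * B) * J := by
              apply mul_le_mul_right
              exact lintegral_mono_set (fun y hy => mem_Ioi.2 (lt_of_lt_of_le one_pos hy))
          _ = ENNReal.ofReal x * (B * J) := by ring
          _ = ENNReal.ofReal x * ENNReal.ofReal D := by rw [hD, ENNReal.ofReal_toReal hEtop]
          _ = ENNReal.ofReal (D * x) := by rw [← ENNReal.ofReal_mul hx.1.le]; ring_nf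
          _ ≤ ENNReal.ofReal (D * x ^ γ) :=
              ENNReal.ofReal_le_ofReal (mul_le_mul_of_nonneg_left hxγ hD0)
      -- assemble
      have hIoi : Ioi (0:ℝ) = Ioo 0 1 ∪ Ici 1 := (Set.Ioo_union_Ici_eq_Ioi one_pos).symm
      show ((2 * (k + 1) : ℕ) : ℝ≥0∞) * _ ≤ _
      calc ((2 * (k + 1) : ℕ) : ℝ≥0∞) *
            (∫⁻ y in Ioi (0:ℝ), ENNReal.ofReal (min x y) * absMoment m k y ∂m)
          ≤ ((2 * (k + 1) : ℕ) : ℝ≥0∞) * (ENNReal.ofReal ((Ck * K) * x ^ γ)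
              + ENNReal.ofReal (D * x ^ γ)) := by
            apply mul_le_mul_right
            rw [hIoi]
            exact le_trans (lintegral_union_le _ _ _) (add_le_add hP1 hP2)
        _ = ((2 * (k + 1) : ℕ) : ℝ≥0∞) * ENNReal.ofReal ((Ck * K + D) * x ^ γ) := by
            rw [← ENNReal.ofReal_add (mul_nonneg (by positivity) hxγ0)
              (mul_nonneg hD0 hxγ0)]
            congr 1; ring
        _ = ENNReal.ofReal (((2 * (k + 1) : ℕ) : ℝ) * ((Ck * K + D) * x ^ γ)) := by
            rw [← ENNReal.ofReal_natCast (2 * (k + 1)),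
              ← ENNReal.ofReal_mul (by positivity : (0:ℝ) ≤ ((2 * (k + 1) : ℕ) : ℝ))]
        _ = ENNReal.ofReal (((2 * (k + 1) : ℕ) : ℝ) * (Ck * K + D) * x ^ γ) := by
            congr 1; ring


theorem stmt0 (m : Measure ℝ)
    (hm : (∫⁻ y in Ioi (0 : ℝ), ENNReal.ofReal y ∂m) < ⊤) :
    (∀ k : ℕ, ∃ B : ℝ≥0∞, B ≠ ⊤ ∧ ∀ x ∈ Ioi (0 : ℝ), absMoment m k x ≤ B) ∧
    (∀ C ρ : ℝ, 0 < C → 0 < ρ → Irrational ρ →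
      (∀ x ∈ Ioo (0 : ℝ) 1,
        (∫⁻ z in Ioo (0 : ℝ) x, ENNReal.ofReal z ∂m) ≤ ENNReal.ofReal (C * x ^ ρ)) →
      ∀ k : ℕ, ∃ Ck : ℝ, 0 < Ck ∧ ∀ x ∈ Ioo (0 : ℝ) 1,
        absMoment m k x ≤ ENNReal.ofReal (Ck * x ^ (min ((k : ℝ) * ρ) 1))) ∧
    (∀ C ρ : ℝ, 0 < C → 0 < ρ →
      (∀ x ∈ Ioo (0 : ℝ) 1,
        (∫⁻ z in Ioo (0 : ℝ) x, ENNReal.ofReal z ∂m) ≤ ENNReal.ofReal (C * x ^ ρ)) →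
      ∃ k : ℕ, 1 ≤ k ∧ ∃ C' : ℝ, 0 < C' ∧ ∀ x ∈ Ioo (0 : ℝ) 1,
        absMoment m k x ≤ ENNReal.ofReal (C' * x)) := by
  refine ⟨?_, ?_, ?_⟩
  · intro k
    obtain ⟨B, hB, hBle⟩ := absMoment_bdd m hm k
    exact ⟨B, hB, fun x _ => hBle x⟩
  · intro C ρ hC hρ hirr hI k
    exact moment_est m hm hC hρ hirr hI k
  · intro C ρ hC hρ hI
    -- choose an irrational exponent ρ' with 0 < ρ' ≤ ρ
    obtain ⟨ρ', hρ'0, hρ'ρ, hρ'irr⟩ :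
        ∃ ρ' : ℝ, 0 < ρ' ∧ ρ' ≤ ρ ∧ Irrational ρ' := by
      by_cases h : Irrational (ρ / 2)
      · exact ⟨ρ / 2, by linarith, by linarith, h⟩
      · rw [Irrational] at h
        push_neg at h
        obtain ⟨q, hq⟩ := h
        have hs2 : Irrational (((1/2 : ℚ) : ℝ) * Real.sqrt 2) :=
          irrational_sqrt_two.ratCast_mul (by norm_num)
        have hq0 : q ≠ 0 := by
          intro h0
          rw [h0] at hq
          simp at hq
          linarith
        refine ⟨(q : ℝ) * (((1/2 : ℚ) : ℝ) * Real.sqrt 2), ?_, ?_, hs2.ratCast_mul hq0⟩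
        · have hq0' : (0:ℝ) < (q : ℝ) := by rw [hq]; linarith
          have : (0:ℝ) < Real.sqrt 2 := Real.sqrt_pos.2 (by norm_num)
          positivity
        · have hq0' : (0:ℝ) < (q : ℝ) := by rw [hq]; linarith
          have hs2lt : Real.sqrt 2 < 2 := by
            nlinarith [Real.sq_sqrt (by norm_num : (0:ℝ) ≤ 2),
              Real.sqrt_nonneg (2:ℝ)]
          have : ((1/2 : ℚ) : ℝ) * Real.sqrt 2 < 1 := by push_cast; nlinarith
          calc (q : ℝ) * (((1/2 : ℚ) : ℝ) * Real.sqrt 2)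
              ≤ (q : ℝ) * 1 := by
                apply mul_le_mul_of_nonneg_left this.le hq0'.le
            _ = ρ / 2 := by rw [mul_one, hq]
            _ ≤ ρ := by linarith
    have hI' : ∀ x ∈ Ioo (0 : ℝ) 1,
        (∫⁻ z in Ioo (0 : ℝ) x, ENNReal.ofReal z ∂m) ≤ ENNReal.ofReal (C * x ^ ρ') := by
      intro x hx
      refine le_trans (hI x hx) (ENNReal.ofReal_le_ofReal ?_)
      apply mul_le_mul_of_nonneg_left ?_ hC.le
      exact Real.rpow_le_rpow_of_exponent_ge hx.1 hx.2.le hρ'ρ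
    set k : ℕ := ⌈1/ρ'⌉₊ with hk
    have hk1 : 1 ≤ k := Nat.one_le_iff_ne_zero.2 (by
      intro h0
      have := Nat.ceil_eq_zero.1 (hk ▸ h0)
      have : (1:ℝ)/ρ' ≤ 0 := this
      have : (0:ℝ) < 1/ρ' := by positivity
      linarith)
    have hkρ : 1 ≤ (k : ℝ) * ρ' := by
      have h1 : (1:ℝ)/ρ' ≤ (k : ℝ) := Nat.le_ceil _
      calc (1:ℝ) = (1/ρ') * ρ' := by field_simp
        _ ≤ (k : ℝ) * ρ' := mul_le_mul_of_nonneg_right h1 hρ'0.le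
    obtain ⟨Ck, hCk0, hCk⟩ := moment_est m hm hC hρ'0 hρ'irr hI' k
    refine ⟨k, hk1, Ck, hCk0, ?_⟩
    intro x hx
    have := hCk x hx
    rwa [min_eq_right hkρ, Real.rpow_one] at this
end

section
/- Let m be a nonnegative Borel measure on (0,∞). Then (1/2) ∫_{(0,1/2)} z dm(z) ≤ ∫_{(0,1)} z(1−z) dm(z) = ∫_0^1 x^{−2} ( ∫_{(0,x)} z² dm(z) ) dx ≤ ∫_0^1 (1/x) · sup_{0<y≤x} ( (1/y) ∫_{(0,y)} z² dm(z) ) dx. In particular, if the last integral is finite, then ∫_{(0,1)} z dm(z) < ∞. -/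
open MeasureTheory Set

private lemma finite_Icc_aux (m : Measure ℝ)
    (hloc : ∀ x : ℝ, 0 < x → ∃ s ∈ nhds x, m s < ⊤) {a b : ℝ} (ha : 0 < a) :
    m (Icc a b) < ⊤ := by
  have hK : IsCompact (Icc a b) := isCompact_Icc
  have hpos : ∀ x ∈ Icc a b, (0:ℝ) < x := fun x hx => ha.trans_le hx.1
  choose U hU hUm using fun (x : ℝ) (hx : x ∈ Icc a b) => hloc x (hpos x hx)
  obtain ⟨t, ht⟩ := hK.elim_nhds_subcover' U hU
  calc m (Icc a b) ≤ m (⋃ x ∈ t, U x x.2) := measure_mono ht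
    _ ≤ ∑ x ∈ t, m (U x x.2) := measure_biUnion_finset_le t _
    _ < ⊤ := ENNReal.sum_lt_top.2 fun x _ => hUm x x.2

private lemma sigmaFinite_aux (m : Measure ℝ)
    (hloc : ∀ x : ℝ, 0 < x → ∃ s ∈ nhds x, m s < ⊤) :
    SigmaFinite (m.restrict (Ioo (0:ℝ) 1)) := by
  refine ⟨⟨⟨fun n => Icc (1/(n+1) : ℝ) 1 ∪ (Iic 0 ∪ Ici 1), fun n => trivial, fun n => ?_, ?_⟩⟩⟩
  · rw [Measure.restrict_apply' measurableSet_Ioo]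
    refine lt_of_le_of_lt (measure_mono ?_) (finite_Icc_aux m hloc
      (a := (1/(n+1) : ℝ)) (b := 1) (by positivity))
    rintro x ⟨(hx | hx | hx), hx2⟩
    · exact hx
    · exact absurd hx2.1 (not_lt.2 hx)
    · exact absurd hx2.2 (not_lt.2 hx)
  · ext x
    simp only [mem_iUnion, mem_union, mem_Icc, mem_Iic, mem_Ici, mem_univ, iff_true]
    rcases le_or_gt x 0 with hx | hx
    · exact ⟨0, Or.inr (Or.inl hx)⟩
    rcases le_or_gt 1 x with hx1 | hx1
    · exact ⟨0, Or.inr (Or.inr hx1)⟩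
    obtain ⟨n, hn⟩ := exists_nat_one_div_lt hx
    exact ⟨n, Or.inl ⟨hn.le, hx1.le⟩⟩

theorem stmt2 (m : Measure ℝ)
    (hloc : ∀ x : ℝ, 0 < x → ∃ s ∈ nhds x, m s < ⊤) :
    (ENNReal.ofReal (1 / 2) * (∫⁻ z in Ioo (0 : ℝ) (1 / 2), ENNReal.ofReal z ∂m) ≤
        ∫⁻ z in Ioo (0 : ℝ) 1, ENNReal.ofReal (z * (1 - z)) ∂m) ∧
    ((∫⁻ z in Ioo (0 : ℝ) 1, ENNReal.ofReal (z * (1 - z)) ∂m) =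
        ∫⁻ x in Ioo (0 : ℝ) 1,
          ENNReal.ofReal (1 / x ^ 2) * (∫⁻ z in Ioo (0 : ℝ) x, ENNReal.ofReal (z ^ 2) ∂m)) ∧
    ((∫⁻ x in Ioo (0 : ℝ) 1,
          ENNReal.ofReal (1 / x ^ 2) * (∫⁻ z in Ioo (0 : ℝ) x, ENNReal.ofReal (z ^ 2) ∂m)) ≤
        ∫⁻ x in Ioo (0 : ℝ) 1,
          ENNReal.ofReal (1 / x) *
            (⨆ y ∈ Ioc (0 : ℝ) x,
              ENNReal.ofReal (1 / y) * (∫⁻ z in Ioo (0 : ℝ) y, ENNReal.ofReal (z ^ 2) ∂m))) ∧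
    ((∫⁻ x in Ioo (0 : ℝ) 1,
          ENNReal.ofReal (1 / x) *
            (⨆ y ∈ Ioc (0 : ℝ) x,
              ENNReal.ofReal (1 / y) * (∫⁻ z in Ioo (0 : ℝ) y, ENNReal.ofReal (z ^ 2) ∂m))) < ⊤ →
      (∫⁻ z in Ioo (0 : ℝ) 1, ENNReal.ofReal z ∂m) < ⊤) := by
  haveI := sigmaFinite_aux m hloc
  -- Part 1
  have h1 : ENNReal.ofReal (1 / 2) * (∫⁻ z in Ioo (0 : ℝ) (1 / 2), ENNReal.ofReal z ∂m) ≤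
      ∫⁻ z in Ioo (0 : ℝ) 1, ENNReal.ofReal (z * (1 - z)) ∂m := by
    rw [← lintegral_const_mul' _ _ ENNReal.ofReal_ne_top]
    refine le_trans (lintegral_mono_ae ((ae_restrict_iff' measurableSet_Ioo).2
      (Filter.Eventually.of_forall fun z hz => ?_)))
      (lintegral_mono_set (Ioo_subset_Ioo le_rfl (by norm_num)))
    rw [← ENNReal.ofReal_mul (by norm_num)]
    exact ENNReal.ofReal_le_ofReal (by nlinarith [hz.1, hz.2])
  have heq : (∫⁻ z in Ioo (0 : ℝ) 1, ENNReal.ofReal (z * (1 - z)) ∂m) =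
      ∫⁻ x in Ioo (0 : ℝ) 1,
        ENNReal.ofReal (1 / x ^ 2) * (∫⁻ z in Ioo (0 : ℝ) x, ENNReal.ofReal (z ^ 2) ∂m) := by
    have hmeas : AEMeasurable (Function.uncurry fun (x z : ℝ) =>
        ({p : ℝ × ℝ | 0 < p.2 ∧ p.2 < p.1}.indicator
          (fun p => ENNReal.ofReal (1 / p.1 ^ 2) * ENNReal.ofReal (p.2 ^ 2)) (x, z)))
        ((volume.restrict (Ioo (0:ℝ) 1)).prod (m.restrict (Ioo (0:ℝ) 1))) := by
      refine (Measurable.indicator ?_ ?_).aemeasurable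
      · exact ((measurable_const.div ((measurable_fst.pow measurable_const))).ennreal_ofReal.mul
          ((measurable_snd.pow measurable_const).ennreal_ofReal))
      · exact ((isOpen_lt continuous_const continuous_snd).inter
          (isOpen_lt continuous_snd continuous_fst)).measurableSet
    symm
    calc ∫⁻ x in Ioo (0:ℝ) 1,
          ENNReal.ofReal (1 / x ^ 2) * (∫⁻ z in Ioo (0:ℝ) x, ENNReal.ofReal (z ^ 2) ∂m)
        = ∫⁻ x in Ioo (0:ℝ) 1, (∫⁻ z in Ioo (0:ℝ) 1,
            {p : ℝ × ℝ | 0 < p.2 ∧ p.2 < p.1}.indicator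
              (fun p => ENNReal.ofReal (1 / p.1 ^ 2) * ENNReal.ofReal (p.2 ^ 2)) (x, z) ∂m) := by
          refine setLIntegral_congr_fun measurableSet_Ioo
            (fun x hx => ?_)
          have : ∀ z : ℝ, {p : ℝ × ℝ | 0 < p.2 ∧ p.2 < p.1}.indicator
              (fun p => ENNReal.ofReal (1 / p.1 ^ 2) * ENNReal.ofReal (p.2 ^ 2)) (x, z)
              = (Ioo (0:ℝ) x).indicator
                (fun z => ENNReal.ofReal (1 / x ^ 2) * ENNReal.ofReal (z ^ 2)) z := by
            intro z
            simp only [Set.indicator_apply, Set.mem_setOf_eq, Set.mem_Ioo]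
          simp only [this]
          rw [lintegral_indicator measurableSet_Ioo,
            Measure.restrict_restrict measurableSet_Ioo,
            inter_eq_left.2 (Ioo_subset_Ioo le_rfl hx.2.le),
            lintegral_const_mul' _ _ ENNReal.ofReal_ne_top]
      _ = ∫⁻ z in Ioo (0:ℝ) 1, (∫⁻ x in Ioo (0:ℝ) 1,
            {p : ℝ × ℝ | 0 < p.2 ∧ p.2 < p.1}.indicator
              (fun p => ENNReal.ofReal (1 / p.1 ^ 2) * ENNReal.ofReal (p.2 ^ 2)) (x, z)) ∂m :=
          lintegral_lintegral_swap (f := fun x z =>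
            {p : ℝ × ℝ | 0 < p.2 ∧ p.2 < p.1}.indicator
              (fun p => ENNReal.ofReal (1 / p.1 ^ 2) * ENNReal.ofReal (p.2 ^ 2)) (x, z)) hmeas
      _ = ∫⁻ z in Ioo (0:ℝ) 1, ENNReal.ofReal (z * (1 - z)) ∂m := by
          refine setLIntegral_congr_fun measurableSet_Ioo
            (fun z hz => ?_)
          have hz0 := hz.1
          have hz1 := hz.2
          have step1 : ∀ x : ℝ, {p : ℝ × ℝ | 0 < p.2 ∧ p.2 < p.1}.indicator
              (fun p => ENNReal.ofReal (1 / p.1 ^ 2) * ENNReal.ofReal (p.2 ^ 2)) (x, z)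
              = (Ioi z).indicator
                (fun x => ENNReal.ofReal (1 / x ^ 2) * ENNReal.ofReal (z ^ 2)) x := by
            intro x
            simp only [Set.indicator_apply, Set.mem_setOf_eq, Set.mem_Ioi, hz0, true_and]
          simp only [step1]
          rw [lintegral_indicator measurableSet_Ioi,
            Measure.restrict_restrict measurableSet_Ioi]
          have hset : Ioi z ∩ Ioo (0:ℝ) 1 = Ioo z 1 := by
            ext x
            simp only [mem_inter_iff, mem_Ioi, mem_Ioo]
            exact ⟨fun h => ⟨h.1, h.2.2⟩, fun h => ⟨h.1, hz0.trans h.1, h.2⟩⟩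
          rw [hset, lintegral_mul_const' _ _ ENNReal.ofReal_ne_top]
          have hInt : IntegrableOn (fun x : ℝ => 1 / x ^ 2) (Ioo z 1) := by
            refine IntegrableOn.mono_set ?_ Ioo_subset_Icc_self
            apply ContinuousOn.integrableOn_Icc
            intro x hx
            exact (continuousOn_const.div (continuousOn_pow 2)
              (fun y hy => pow_ne_zero 2 (ne_of_gt (hz0.trans_le hy.1)))) x hx
          rw [← ofReal_integral_eq_lintegral_ofReal hInt
            (Filter.Eventually.of_forall fun x => by positivity)]
          have : ∫ x in Ioo z 1, (1 / x ^ 2 : ℝ) = 1 / z - 1 := by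
            rw [← integral_Ioc_eq_integral_Ioo,
              ← intervalIntegral.integral_of_le hz1.le]
            have h2 : ∀ x ∈ uIcc z 1, (1 / x ^ 2 : ℝ) = x ^ (-2 : ℤ) := by
              intro x hx
              rw [uIcc_of_le hz1.le] at hx
              have hx0 : (0:ℝ) < x := hz0.trans_le hx.1
              rw [zpow_neg, ← zpow_natCast]
              norm_num
            rw [intervalIntegral.integral_congr h2,
              integral_zpow (Or.inr ⟨by norm_num,
                by rw [uIcc_of_le hz1.le]; exact fun h => absurd h.1 (not_le.2 hz0)⟩)]
            norm_num
            ring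
          rw [this, ← ENNReal.ofReal_mul (by
            rw [sub_nonneg, le_div_iff₀ hz0]; linarith)]
          congr 1
          field_simp
  have h3 : (∫⁻ x in Ioo (0 : ℝ) 1,
        ENNReal.ofReal (1 / x ^ 2) * (∫⁻ z in Ioo (0 : ℝ) x, ENNReal.ofReal (z ^ 2) ∂m)) ≤
      ∫⁻ x in Ioo (0 : ℝ) 1,
        ENNReal.ofReal (1 / x) *
          (⨆ y ∈ Ioc (0 : ℝ) x,
            ENNReal.ofReal (1 / y) * (∫⁻ z in Ioo (0 : ℝ) y, ENNReal.ofReal (z ^ 2) ∂m)) := by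
    refine lintegral_mono_ae ((ae_restrict_iff' measurableSet_Ioo).2
      (Filter.Eventually.of_forall fun x hx => ?_))
    have hx0 := hx.1
    have hsplit : ENNReal.ofReal (1 / x ^ 2) =
        ENNReal.ofReal (1 / x) * ENNReal.ofReal (1 / x) := by
      rw [← ENNReal.ofReal_mul (by positivity)]
      congr 1
      field_simp
    rw [hsplit, mul_assoc]
    refine mul_le_mul_right ?_ _
    exact le_biSup (fun y => ENNReal.ofReal (1 / y) *
      ∫⁻ z in Ioo (0 : ℝ) y, ENNReal.ofReal (z ^ 2) ∂m) ⟨hx0, le_refl x⟩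
  refine ⟨h1, heq, h3, ?_⟩
  · intro hfin
    have h2 : (∫⁻ z in Ioo (0 : ℝ) 1, ENNReal.ofReal (z * (1 - z)) ∂m) < ⊤ :=
      lt_of_le_of_lt heq.le (h3.trans_lt hfin)
    have hA : (∫⁻ z in Ioo (0 : ℝ) (1/2), ENNReal.ofReal z ∂m) < ⊤ :=
      ENNReal.lt_top_of_mul_ne_top_right (h1.trans_lt h2).ne (by norm_num)
    have hB : (∫⁻ z in Ico (1/2 : ℝ) 1, ENNReal.ofReal z ∂m) < ⊤ := by
      calc (∫⁻ z in Ico (1/2 : ℝ) 1, ENNReal.ofReal z ∂m)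
          ≤ ∫⁻ _ in Ico (1/2 : ℝ) 1, (1 : ENNReal) ∂m :=
            lintegral_mono_ae ((ae_restrict_iff' measurableSet_Ico).2
              (Filter.Eventually.of_forall fun z hz => ENNReal.ofReal_le_one.2 hz.2.le))
        _ = m (Ico (1/2 : ℝ) 1) := by rw [lintegral_one, Measure.restrict_apply_univ]
        _ < ⊤ := (measure_mono Ico_subset_Icc_self).trans_lt
            (finite_Icc_aux m hloc (by norm_num))
    calc (∫⁻ z in Ioo (0 : ℝ) 1, ENNReal.ofReal z ∂m)
        ≤ ∫⁻ z in Ioo (0 : ℝ) (1/2) ∪ Ico (1/2 : ℝ) 1, ENNReal.ofReal z ∂m := by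
          refine lintegral_mono_set fun z hz => ?_
          rcases lt_or_ge z (1/2) with h | h
          · exact Or.inl ⟨hz.1, h⟩
          · exact Or.inr ⟨h, hz.2⟩
      _ ≤ (∫⁻ z in Ioo (0 : ℝ) (1/2), ENNReal.ofReal z ∂m) +
          ∫⁻ z in Ico (1/2 : ℝ) 1, ENNReal.ofReal z ∂m := lintegral_union_le _ _ _
      _ < ⊤ := ENNReal.add_lt_top.2 ⟨hA, hB⟩
end

section
/- Let ε > 0, C > 0, x₀ > 1, and let m̃ be a locally finite nonnegative Borel measure on (0,∞) whose restriction to (x₀,∞) is absolutely continuous with respect to Lebesgue measure with density g satisfying g(z) ≤ C / ( z² (log z)^{1+ε} ) for all z > x₀. Then ∫_1^∞ (1/x) · sup_{y≥x} ( y · m̃((y,∞)) ) dx < ∞. -/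
open MeasureTheory Set

theorem stmt3 (ε C x₀ : ℝ) (hε : 0 < ε) (hC : 0 < C) (hx₀ : 1 < x₀)
    (mt : Measure ℝ) (hloc : ∀ x : ℝ, 0 < x → ∃ s ∈ nhds x, mt s < ⊤)
    (g : ℝ → ℝ)
    (hdens : ∀ s : Set ℝ, MeasurableSet s → s ⊆ Ioi x₀ →
      mt s = ∫⁻ z in s, ENNReal.ofReal (g z))
    (hgb : ∀ z : ℝ, x₀ < z → g z ≤ C / (z ^ 2 * Real.log z ^ (1 + ε))) :
    (∫⁻ x in Ioi (1 : ℝ),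
      ENNReal.ofReal (1 / x) * (⨆ y ∈ Ici x, ENNReal.ofReal y * mt (Ioi y))) < ⊤ := by
  have hx₀0 : (0:ℝ) < x₀ := lt_trans one_pos hx₀
  have hlx₀ : 0 < Real.log x₀ := Real.log_pos hx₀
  -- Step A : tail bound for y ≥ x₀
  have key : ∀ y : ℝ, x₀ ≤ y →
      mt (Ioi y) ≤ ENNReal.ofReal (C / Real.log y ^ (1 + ε) / y) := by
    intro y hy
    have hy1 : (1:ℝ) < y := lt_of_lt_of_le hx₀ hy
    have hy0 : (0:ℝ) < y := lt_trans one_pos hy1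
    have hly : 0 < Real.log y := Real.log_pos hy1
    set K := C / Real.log y ^ (1 + ε) with hK
    have hKpos : 0 < K := div_pos hC (Real.rpow_pos_of_pos hly _)
    -- the comparison function
    have hderiv' : ∀ z ∈ Ioi y, HasDerivAt (fun t : ℝ => -t⁻¹) ((z ^ 2)⁻¹) z := by
      intro z hz
      have hz0 : z ≠ 0 := ne_of_gt (lt_trans hy0 hz)
      have h := (hasDerivAt_inv hz0).neg
      rw [neg_neg] at h
      exact h
    have hcont : ContinuousWithinAt (fun t : ℝ => -t⁻¹) (Ici y) y :=
      ((continuousAt_inv₀ (ne_of_gt hy0)).neg).continuousWithinAt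
    have htend : Filter.Tendsto (fun t : ℝ => -t⁻¹) Filter.atTop (nhds 0) := by
      have := (tendsto_inv_atTop_zero (𝕜 := ℝ)).neg
      simpa using this
    have hnn : ∀ z ∈ Ioi y, 0 ≤ ((z:ℝ) ^ 2)⁻¹ := fun z _ => by positivity
    have hint : IntegrableOn (fun z : ℝ => (z ^ 2)⁻¹) (Ioi y) volume :=
      integrableOn_Ioi_deriv_of_nonneg hcont hderiv' hnn htend
    have hval : ∫ z in Ioi y, ((z:ℝ) ^ 2)⁻¹ = y⁻¹ := by
      have := integral_Ioi_of_hasDerivAt_of_tendsto hcont hderiv' hint htend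
      simpa using this
    calc mt (Ioi y) = ∫⁻ z in Ioi y, ENNReal.ofReal (g z) :=
          hdens _ measurableSet_Ioi (Ioi_subset_Ioi hy)
      _ ≤ ∫⁻ z in Ioi y, ENNReal.ofReal (K * (z ^ 2)⁻¹) := by
          refine lintegral_mono_ae ((ae_restrict_iff' measurableSet_Ioi).mpr
            (Filter.Eventually.of_forall fun z hz => ?_))
          refine ENNReal.ofReal_le_ofReal ?_
          have hzy : y < z := hz
          have hz1 : (1:ℝ) < z := lt_trans hy1 hzy
          have hz0 : (0:ℝ) < z := lt_trans one_pos hz1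
          have hlz : Real.log y ≤ Real.log z := Real.log_le_log hy0 hzy.le
          have hlz0 : 0 < Real.log z := lt_of_lt_of_le hly hlz
          have hpow : Real.log y ^ (1 + ε) ≤ Real.log z ^ (1 + ε) :=
            Real.rpow_le_rpow hly.le hlz (by linarith)
          have h1 : g z ≤ C / (z ^ 2 * Real.log z ^ (1 + ε)) :=
            hgb z (lt_of_le_of_lt hy hzy)
          have h2 : C / (z ^ 2 * Real.log z ^ (1 + ε)) ≤
              C / (z ^ 2 * Real.log y ^ (1 + ε)) := by
            gcongr
          have h3 : C / (z ^ 2 * Real.log y ^ (1 + ε)) = K * (z ^ 2)⁻¹ := by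
            rw [hK, mul_comm (z ^ 2) (Real.log y ^ (1 + ε)), ← div_div,
              div_eq_mul_inv (C / Real.log y ^ (1 + ε))]
          exact h1.trans (h2.trans_eq h3)
      _ = ENNReal.ofReal (∫ z in Ioi y, K * (z ^ 2)⁻¹) := by
          refine (ofReal_integral_eq_lintegral_ofReal (hint.const_mul K) ?_).symm
          exact Filter.Eventually.of_forall fun z => by positivity
      _ = ENNReal.ofReal (C / Real.log y ^ (1 + ε) / y) := by
          rw [integral_const_mul, hval, hK, div_eq_mul_inv, div_eq_mul_inv]
  -- Step A' : y * tail bound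
  have yb : ∀ y : ℝ, x₀ ≤ y →
      ENNReal.ofReal y * mt (Ioi y) ≤ ENNReal.ofReal (C / Real.log y ^ (1 + ε)) := by
    intro y hy
    have hy0 : (0:ℝ) < y := lt_trans one_pos (lt_of_lt_of_le hx₀ hy)
    calc ENNReal.ofReal y * mt (Ioi y)
        ≤ ENNReal.ofReal y * ENNReal.ofReal (C / Real.log y ^ (1 + ε) / y) :=
          mul_le_mul_right (key y hy) _
      _ = ENNReal.ofReal (y * (C / Real.log y ^ (1 + ε) / y)) :=
          (ENNReal.ofReal_mul hy0.le).symm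
      _ = ENNReal.ofReal (C / Real.log y ^ (1 + ε)) := by
          rw [mul_comm, div_mul_cancel₀ _ (ne_of_gt hy0)]
  -- finiteness of mt (Ioi 1)
  have hIcc : mt (Icc 1 x₀) < ⊤ := by
    choose s hs hsf using hloc
    classical
    set U : ℝ → Set ℝ := fun x => if h : 0 < x then s x h else Set.univ with hU
    have hUn : ∀ x ∈ Icc (1:ℝ) x₀, U x ∈ nhds x := by
      intro x hx
      have hx0 : 0 < x := lt_of_lt_of_le one_pos hx.1
      simp only [hU, dif_pos hx0]
      exact hs x hx0
    obtain ⟨t, htmem, hcov⟩ := isCompact_Icc.elim_nhds_subcover U hUn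
    calc mt (Icc 1 x₀) ≤ mt (⋃ x ∈ t, U x) := measure_mono hcov
      _ ≤ ∑ x ∈ t, mt (U x) := measure_biUnion_finset_le t U
      _ < ⊤ := by
          refine ENNReal.sum_lt_top.mpr fun x hx => ?_
          have hx0 : 0 < x := lt_of_lt_of_le one_pos (htmem x hx).1
          simp only [hU, dif_pos hx0]
          exact hsf x hx0
  have hT : mt (Ioi 1) < ⊤ := by
    have hsub : Ioi (1:ℝ) ⊆ Icc 1 x₀ ∪ Ioi x₀ := by
      intro z hz
      rcases le_or_gt z x₀ with h | h
      · exact Or.inl ⟨le_of_lt hz, h⟩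
      · exact Or.inr h
    calc mt (Ioi 1) ≤ mt (Icc 1 x₀ ∪ Ioi x₀) := measure_mono hsub
      _ ≤ mt (Icc 1 x₀) + mt (Ioi x₀) := measure_union_le _ _
      _ < ⊤ := ENNReal.add_lt_top.mpr ⟨hIcc,
          lt_of_le_of_lt (key x₀ le_rfl) ENNReal.ofReal_lt_top⟩
  -- global bound on the sup
  set M : ENNReal := ENNReal.ofReal x₀ * mt (Ioi 1) +
    ENNReal.ofReal (C / Real.log x₀ ^ (1 + ε)) with hM
  have hMfin : M < ⊤ := ENNReal.add_lt_top.mpr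
    ⟨ENNReal.mul_lt_top ENNReal.ofReal_lt_top hT, ENNReal.ofReal_lt_top⟩
  have hsupM : ∀ x : ℝ, 1 < x →
      (⨆ y ∈ Ici x, ENNReal.ofReal y * mt (Ioi y)) ≤ M := by
    intro x hx
    refine iSup₂_le fun y hy => ?_
    have hy1 : (1:ℝ) < y := lt_of_lt_of_le hx hy
    rcases le_or_gt y x₀ with h | h
    · refine le_trans ?_ le_self_add
      exact mul_le_mul' (ENNReal.ofReal_le_ofReal h)
        (measure_mono (Ioi_subset_Ioi hy1.le))
    · refine le_trans (yb y h.le) (le_trans ?_ le_add_self)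
      refine ENNReal.ofReal_le_ofReal ?_
      exact div_le_div_of_nonneg_left hC.le (Real.rpow_pos_of_pos hlx₀ _)
        (Real.rpow_le_rpow hlx₀.le (Real.log_le_log hx₀0 h.le) (by linarith))
  have hsup2 : ∀ x : ℝ, x₀ < x →
      (⨆ y ∈ Ici x, ENNReal.ofReal y * mt (Ioi y)) ≤
        ENNReal.ofReal (C / Real.log x ^ (1 + ε)) := by
    intro x hx
    have hlx : 0 < Real.log x := Real.log_pos (lt_trans hx₀ hx)
    refine iSup₂_le fun y hy => ?_
    refine le_trans (yb y (le_trans hx.le hy)) (ENNReal.ofReal_le_ofReal ?_)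
    exact div_le_div_of_nonneg_left hC.le (Real.rpow_pos_of_pos hlx _)
      (Real.rpow_le_rpow hlx.le (Real.log_le_log (lt_trans hx₀0 hx) hy) (by linarith))
  -- split the outer integral
  have hsplit : Ioi (1:ℝ) = Ioc 1 x₀ ∪ Ioi x₀ := (Ioc_union_Ioi_eq_Ioi hx₀.le).symm
  rw [hsplit, lintegral_union measurableSet_Ioi (Ioc_disjoint_Ioi le_rfl)]
  refine ENNReal.add_lt_top.mpr ⟨?_, ?_⟩
  · -- compact part
    calc (∫⁻ x in Ioc 1 x₀, ENNReal.ofReal (1 / x) *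
          (⨆ y ∈ Ici x, ENNReal.ofReal y * mt (Ioi y)))
        ≤ ∫⁻ _ in Ioc 1 x₀, M := by
          refine lintegral_mono_ae ((ae_restrict_iff' measurableSet_Ioc).mpr
            (Filter.Eventually.of_forall fun x hx => ?_))
          have hx1 : (1:ℝ) < x := hx.1
          calc ENNReal.ofReal (1 / x) * (⨆ y ∈ Ici x, ENNReal.ofReal y * mt (Ioi y))
              ≤ 1 * M := mul_le_mul'
                (ENNReal.ofReal_le_one.mpr (by rw [div_le_one (by linarith)]; linarith))
                (hsupM x hx1)
            _ = M := one_mul M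
      _ = M * volume (Ioc 1 x₀) := setLIntegral_const _ _
      _ < ⊤ := ENNReal.mul_lt_top hMfin measure_Ioc_lt_top
  · -- tail part
    -- integrability of x ↦ C / (x * log x ^ (1+ε)) on (x₀, ∞)
    set ψ : ℝ → ℝ := fun x => C / (x * Real.log x ^ (1 + ε)) with hψ
    set φ : ℝ → ℝ := fun x => -(C / ε) * Real.log x ^ (-ε) with hφ
    have hφderiv : ∀ x ∈ Ioi x₀, HasDerivAt φ (ψ x) x := by
      intro x hx
      have hx1 : (1:ℝ) < x := lt_trans hx₀ hx
      have hx0 : (0:ℝ) < x := lt_trans one_pos hx1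
      have hlx : 0 < Real.log x := Real.log_pos hx1
      have h1 : HasDerivAt (fun t : ℝ => Real.log t ^ (-ε))
          (x⁻¹ * (-ε) * Real.log x ^ (-ε - 1)) x :=
        (Real.hasDerivAt_log (ne_of_gt hx0)).rpow_const (Or.inl (ne_of_gt hlx))
      have h2 := h1.const_mul (-(C / ε))
      have heq : -(C / ε) * (x⁻¹ * (-ε) * Real.log x ^ (-ε - 1)) = ψ x := by
        have hrw : Real.log x ^ (-ε - 1) = (Real.log x ^ (1 + ε))⁻¹ := by
          rw [show -ε - 1 = -(1 + ε) by ring, Real.rpow_neg hlx.le]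
        rw [hrw, hψ]
        have hne : Real.log x ^ (1 + ε) ≠ 0 := ne_of_gt (Real.rpow_pos_of_pos hlx _)
        field_simp
      rw [heq] at h2
      exact h2
    have hφcont : ContinuousWithinAt φ (Ici x₀) x₀ := by
      have hlog : ContinuousAt Real.log x₀ := Real.continuousAt_log (ne_of_gt hx₀0)
      have h1 : ContinuousAt (fun t : ℝ => Real.log t ^ (-ε)) x₀ :=
        hlog.rpow_const (Or.inl (ne_of_gt hlx₀))
      exact (continuousAt_const.mul h1).continuousWithinAt
    have hφtend : Filter.Tendsto φ Filter.atTop (nhds 0) := by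
      have h1 : Filter.Tendsto (fun t : ℝ => Real.log t ^ (-ε)) Filter.atTop (nhds 0) :=
        (tendsto_rpow_neg_atTop hε).comp Real.tendsto_log_atTop
      have := h1.const_mul (-(C / ε))
      simpa [hφ] using this
    have hψnn : ∀ x ∈ Ioi x₀, 0 ≤ ψ x := by
      intro x hx
      have hx1 : (1:ℝ) < x := lt_trans hx₀ hx
      have hlx : 0 < Real.log x := Real.log_pos hx1
      have : 0 < x * Real.log x ^ (1 + ε) :=
        mul_pos (by linarith) (Real.rpow_pos_of_pos hlx _)
      exact le_of_lt (div_pos hC this)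
    have hψint : IntegrableOn ψ (Ioi x₀) volume :=
      integrableOn_Ioi_deriv_of_nonneg hφcont hφderiv hψnn hφtend
    calc (∫⁻ x in Ioi x₀, ENNReal.ofReal (1 / x) *
          (⨆ y ∈ Ici x, ENNReal.ofReal y * mt (Ioi y)))
        ≤ ∫⁻ x in Ioi x₀, ENNReal.ofReal (ψ x) := by
          refine lintegral_mono_ae ((ae_restrict_iff' measurableSet_Ioi).mpr
            (Filter.Eventually.of_forall fun x hx => ?_))
          have hx1 : (1:ℝ) < x := lt_trans hx₀ hx
          have hx0 : (0:ℝ) < x := lt_trans one_pos hx1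
          calc ENNReal.ofReal (1 / x) * (⨆ y ∈ Ici x, ENNReal.ofReal y * mt (Ioi y))
              ≤ ENNReal.ofReal (1 / x) * ENNReal.ofReal (C / Real.log x ^ (1 + ε)) :=
                mul_le_mul_right (hsup2 x hx) _
            _ = ENNReal.ofReal ((1 / x) * (C / Real.log x ^ (1 + ε))) :=
                (ENNReal.ofReal_mul (by positivity)).symm
            _ = ENNReal.ofReal (ψ x) := by
                rw [hψ, div_mul_div_comm, one_mul]
      _ = ENNReal.ofReal (∫ x in Ioi x₀, ψ x) := by
          refine (ofReal_integral_eq_lintegral_ofReal hψint ?_).symm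
          exact (ae_restrict_iff' measurableSet_Ioi).mpr
            (Filter.Eventually.of_forall hψnn)
      _ < ⊤ := ENNReal.ofReal_lt_top
end

section
/- Let ε > 0, C > 0, z₀ ∈ (0,1), and let m be a locally finite nonnegative Borel measure on (0,∞) whose restriction to (0,z₀) is absolutely continuous with respect to Lebesgue measure with density g satisfying g(z) ≤ C / ( z² (log(1/z))^{1+ε} ) for all z ∈ (0,z₀). Then ∫_0^1 (1/x) · sup_{0<y≤x} ( (1/y) ∫_{(0,y)} z² dm(z) ) dx < ∞. -/
open MeasureTheory Set

theorem stmt4 (ε C z₀ : ℝ) (hε : 0 < ε) (hC : 0 < C) (hz₀ : z₀ ∈ Ioo (0 : ℝ) 1)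
    (m : Measure ℝ) (hloc : ∀ x : ℝ, 0 < x → ∃ s ∈ nhds x, m s < ⊤)
    (g : ℝ → ℝ)
    (hdens : ∀ s : Set ℝ, MeasurableSet s → s ⊆ Ioo 0 z₀ →
      m s = ∫⁻ z in s, ENNReal.ofReal (g z))
    (hgb : ∀ z ∈ Ioo (0 : ℝ) z₀, g z ≤ C / (z ^ 2 * Real.log (1 / z) ^ (1 + ε))) :
    (∫⁻ x in Ioo (0 : ℝ) 1,
      ENNReal.ofReal (1 / x) *
        (⨆ y ∈ Ioc (0 : ℝ) x,
          ENNReal.ofReal (1 / y) * (∫⁻ z in Ioo (0 : ℝ) y, ENNReal.ofReal (z ^ 2) ∂m))) < ⊤ := by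
  obtain ⟨hz0, hz1⟩ := hz₀
  set L : ℝ → ℝ := fun z => Real.log (1 / z) ^ (1 + ε) with hLdef
  set F : ℝ → ENNReal := fun y => ∫⁻ z in Ioo (0 : ℝ) y, ENNReal.ofReal (z ^ 2) ∂m with hFdef
  have hεpos : (0:ℝ) ≤ 1 + ε := by linarith
  -- basic facts about L
  have hLpos : ∀ z : ℝ, 0 < z → z < 1 → 0 < L z := by
    intro z h0 h1
    exact Real.rpow_pos_of_pos (Real.log_pos (one_lt_one_div h0 h1)) _
  have hLanti : ∀ y x : ℝ, 0 < y → y ≤ x → x < 1 → L x ≤ L y := by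
    intro y x h0 hyx h1
    have hx0 : 0 < x := lt_of_lt_of_le h0 hyx
    refine Real.rpow_le_rpow (Real.log_nonneg (one_le_one_div hx0 h1.le)) ?_ hεpos
    exact Real.log_le_log (by positivity) (one_div_le_one_div_of_le h0 hyx)
  have hCL : ∀ y x : ℝ, 0 < y → y ≤ x → x < 1 → C / L y ≤ C / L x := by
    intro y x h0 hyx h1
    have hx0 : 0 < x := lt_of_lt_of_le h0 hyx
    have h1' : 0 < L x := hLpos x hx0 h1
    have h2' : L x ≤ L y := hLanti y x h0 hyx h1
    gcongr
  -- measurability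
  have hlogmeas : Measurable fun z : ℝ => Real.log (1 / z) :=
    Real.measurable_log.comp (measurable_const.div measurable_id)
  have hLmeas : Measurable L :=
    (Real.continuous_rpow_const hεpos).measurable.comp hlogmeas
  have hhmeas : Measurable fun z : ℝ => ENNReal.ofReal (C / (z ^ 2 * L z)) := by
    apply Measurable.ennreal_ofReal
    exact measurable_const.div ((measurable_id.pow_const 2).mul hLmeas)
  -- domination of m by the density bound on (0, z₀)
  set ν : Measure ℝ := volume.withDensity fun z => ENNReal.ofReal (C / (z ^ 2 * L z)) with hνdef
  have hmν : ∀ s : Set ℝ, MeasurableSet s → s ⊆ Ioo 0 z₀ → m s ≤ ν s := by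
    intro s hs hsub
    rw [hdens s hs hsub, hνdef, withDensity_apply _ hs]
    exact setLIntegral_mono hhmeas fun z hz => ENNReal.ofReal_le_ofReal (hgb z (hsub hz))
  -- bound on F for small y
  have hF : ∀ y : ℝ, 0 < y → y ≤ z₀ → F y ≤ ENNReal.ofReal (C * y / L y) := by
    intro y h0 hyz
    have hy1 : y < 1 := lt_of_le_of_lt hyz hz1
    have hsub : Ioo (0:ℝ) y ⊆ Ioo 0 z₀ := Ioo_subset_Ioo le_rfl hyz
    have hres : m.restrict (Ioo 0 y) ≤ ν.restrict (Ioo 0 y) := by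
      rw [Measure.le_iff]
      intro s hs
      rw [Measure.restrict_apply hs, Measure.restrict_apply hs]
      exact hmν _ (hs.inter measurableSet_Ioo) fun z hz => hsub hz.2
    calc F y ≤ ∫⁻ z in Ioo (0:ℝ) y, ENNReal.ofReal (z ^ 2) ∂ν :=
          lintegral_mono' hres le_rfl
      _ = ∫⁻ z in Ioo (0:ℝ) y,
            ((fun z => ENNReal.ofReal (C / (z ^ 2 * L z))) * fun z => ENNReal.ofReal (z ^ 2)) z := by
          have hzmeas : Measurable fun z : ℝ => ENNReal.ofReal (z ^ 2) :=
            (measurable_id.pow_const 2).ennreal_ofReal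
          rw [hνdef, setLIntegral_withDensity_eq_setLIntegral_mul _ hhmeas
            hzmeas measurableSet_Ioo]
      _ ≤ ∫⁻ _ in Ioo (0:ℝ) y, ENNReal.ofReal (C / L y) := by
          refine setLIntegral_mono measurable_const fun z hz => ?_
          have hz0' : 0 < z := hz.1
          have hzy : z < y := hz.2
          have hz1' : z < 1 := hzy.trans hy1
          have hz2 : (z:ℝ) ^ 2 ≠ 0 := by positivity
          have hLz : 0 < L z := hLpos z hz0' hz1'
          simp only [Pi.mul_apply]
          rw [← ENNReal.ofReal_mul (div_pos hC (mul_pos (by positivity) hLz)).le]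
          apply ENNReal.ofReal_le_ofReal
          have heq : C / (z ^ 2 * L z) * z ^ 2 = C / L z := by
            rw [div_mul_eq_mul_div, mul_comm C (z ^ 2), mul_div_mul_left _ _ hz2]
          rw [heq]
          exact hCL z y hz0' hzy.le hy1
      _ = ENNReal.ofReal (C / L y) * volume (Ioo (0:ℝ) y) := setLIntegral_const _ _
      _ = ENNReal.ofReal (C * y / L y) := by
          have hLy : 0 < L y := hLpos y h0 hy1
          rw [Real.volume_Ioo, sub_zero, ← ENNReal.ofReal_mul (div_pos hC hLy).le,
            div_mul_eq_mul_div]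
  -- bound on each term of the sup, for small y
  have hterm : ∀ y : ℝ, 0 < y → y ≤ z₀ →
      ENNReal.ofReal (1 / y) * F y ≤ ENNReal.ofReal (C / L y) := by
    intro y h0 hyz
    calc ENNReal.ofReal (1 / y) * F y
        ≤ ENNReal.ofReal (1 / y) * ENNReal.ofReal (C * y / L y) :=
          mul_le_mul_right (hF y h0 hyz) _
      _ = ENNReal.ofReal (1 / y * (C * y / L y)) := by
          rw [← ENNReal.ofReal_mul (by positivity)]
      _ = ENNReal.ofReal (C / L y) := by
          congr 1
          rw [mul_comm C y, ← mul_div_assoc, one_div, inv_mul_cancel_left₀ h0.ne']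
  -- sup bound for small x
  have hS1 : ∀ x : ℝ, 0 < x → x ≤ z₀ →
      (⨆ y ∈ Ioc (0:ℝ) x, ENNReal.ofReal (1 / y) * F y) ≤ ENNReal.ofReal (C / L x) := by
    intro x h0 hxz
    refine iSup₂_le fun y hy => ?_
    exact (hterm y hy.1 (hy.2.trans hxz)).trans
      (ENNReal.ofReal_le_ofReal (hCL y x hy.1 hy.2 (lt_of_le_of_lt hxz hz1)))
  -- finiteness of m on [z₀, 1]
  have hmcpt : m (Icc z₀ 1) < ⊤ := by
    refine isCompact_Icc.measure_lt_top_of_nhdsWithin fun x hx => ?_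
    obtain ⟨s, hs, hfin⟩ := hloc x (lt_of_lt_of_le hz0 hx.1)
    exact ⟨s, nhdsWithin_le_nhds hs, hfin⟩
  -- global bound on the sup, for x < 1
  set K : ENNReal := ENNReal.ofReal (C / L z₀) +
    ENNReal.ofReal (1 / z₀) * (F z₀ + m (Icc z₀ 1)) with hKdef
  have hKfin : K < ⊤ := by
    have h1 : F z₀ + m (Icc z₀ 1) < ⊤ :=
      ENNReal.add_lt_top.2 ⟨lt_of_le_of_lt (hF z₀ hz0 le_rfl) ENNReal.ofReal_lt_top, hmcpt⟩
    exact ENNReal.add_lt_top.2 ⟨ENNReal.ofReal_lt_top,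
      ENNReal.mul_lt_top ENNReal.ofReal_lt_top h1⟩
  have hSK : ∀ x : ℝ, 0 < x → x < 1 →
      (⨆ y ∈ Ioc (0:ℝ) x, ENNReal.ofReal (1 / y) * F y) ≤ K := by
    intro x h0 h1
    refine iSup₂_le fun y hy => ?_
    rcases le_or_gt y z₀ with h | h
    · refine le_trans (le_trans (hterm y hy.1 h) ?_) le_self_add
      exact ENNReal.ofReal_le_ofReal (hCL y z₀ hy.1 h hz1)
    · have hy1 : y < 1 := lt_of_le_of_lt hy.2 h1
      have hFy : F y ≤ F z₀ + m (Icc z₀ 1) := by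
        have hunion : Ioo (0:ℝ) z₀ ∪ Ico z₀ y = Ioo 0 y := Ioo_union_Ico_eq_Ioo hz0 h.le
        have hdisj : Disjoint (Ioo (0:ℝ) z₀) (Ico z₀ y) :=
          Set.disjoint_left.2 fun z h1' h2' => absurd h1'.2 (not_lt.2 h2'.1)
        rw [hFdef]
        simp only
        rw [← hunion, lintegral_union measurableSet_Ico hdisj]
        refine add_le_add le_rfl ?_
        calc ∫⁻ z in Ico z₀ y, ENNReal.ofReal (z ^ 2) ∂m
            ≤ ∫⁻ _ in Ico z₀ y, 1 ∂m := by
              refine setLIntegral_mono measurable_const fun z hz => ?_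
              have hzz : z < 1 := lt_of_lt_of_le hz.2 hy1.le
              have hz0' : (0:ℝ) ≤ z := le_trans hz0.le hz.1
              exact ENNReal.ofReal_le_one.2 (by nlinarith)
          _ = m (Ico z₀ y) := setLIntegral_one _
          _ ≤ m (Icc z₀ 1) := measure_mono fun z hz => ⟨hz.1, (lt_of_lt_of_le hz.2 hy1.le).le⟩
      calc ENNReal.ofReal (1 / y) * F y
          ≤ ENNReal.ofReal (1 / z₀) * (F z₀ + m (Icc z₀ 1)) :=
            mul_le_mul' (ENNReal.ofReal_le_ofReal (one_div_le_one_div_of_le hz0 h.le)) hFy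
        _ ≤ K := le_add_self
  -- integrability of the comparison function on (0, z₀)
  have hintOn : IntegrableOn (fun x : ℝ => C / (x * L x)) (Ioo 0 z₀) := by
    set a : ℝ := Real.log (1 / z₀) with hadef
    have ha : 0 < a := Real.log_pos (one_lt_one_div hz0 hz1)
    have haz : Real.exp (-a) = z₀ := by
      rw [hadef, one_div, Real.log_inv, neg_neg, Real.exp_log hz0]
    have himg : (fun t : ℝ => Real.exp (-t)) '' Ioi a = Ioo 0 z₀ := by
      ext x
      constructor
      · rintro ⟨t, ht, rfl⟩
        refine ⟨Real.exp_pos _, ?_⟩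
        rw [← haz]
        exact Real.exp_lt_exp.2 (neg_lt_neg ht)
      · intro hx
        refine ⟨-Real.log x, ?_, by simp [Real.exp_log hx.1]⟩
        have : Real.log x < Real.log z₀ := Real.log_lt_log hx.1 hx.2
        have h2 : a = -Real.log z₀ := by rw [hadef, one_div, Real.log_inv]
        rw [mem_Ioi, h2]
        linarith
    have hderiv : ∀ t ∈ Ioi a, HasDerivWithinAt (fun t : ℝ => Real.exp (-t))
        (-Real.exp (-t)) (Ioi a) t := by
      intro t _
      have h := (Real.hasDerivAt_exp (-t)).comp t (hasDerivAt_neg t)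
      simpa [mul_comm, Function.comp_def] using h.hasDerivWithinAt
    have hinj : InjOn (fun t : ℝ => Real.exp (-t)) (Ioi a) := fun t1 _ t2 _ h =>
      neg_injective (Real.exp_injective h)
    rw [← himg, integrableOn_image_iff_integrableOn_abs_deriv_smul measurableSet_Ioi hderiv hinj]
    have hint : IntegrableOn (fun t : ℝ => C * t ^ (-(1 + ε))) (Ioi a) :=
      (integrableOn_Ioi_rpow_of_lt (by linarith) ha).const_mul C
    refine hint.congr_fun (fun t ht => ?_) measurableSet_Ioi
    have ht0 : 0 < t := ha.trans ht
    have hlg : Real.log (1 / Real.exp (-t)) = t := by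
      rw [one_div, Real.exp_neg, inv_inv, Real.log_exp]
    have hLe : L (Real.exp (-t)) = t ^ (1 + ε) := by rw [hLdef]; simp only; rw [hlg]
    have hX : (0:ℝ) < t ^ (1 + ε) := Real.rpow_pos_of_pos ht0 _
    beta_reduce
    rw [abs_neg, abs_of_pos (Real.exp_pos _), smul_eq_mul, hLe,
      Real.rpow_neg ht0.le]
    field_simp
  -- split the integral
  have hdisj : Disjoint (Ioo (0:ℝ) z₀) (Ico z₀ 1) :=
    Set.disjoint_left.2 fun z h1' h2' => absurd h1'.2 (not_lt.2 h2'.1)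
  have hsplit : Ioo (0:ℝ) 1 = Ioo 0 z₀ ∪ Ico z₀ 1 := (Ioo_union_Ico_eq_Ioo hz0 hz1.le).symm
  rw [hsplit, lintegral_union measurableSet_Ico hdisj]
  refine ENNReal.add_lt_top.2 ⟨?_, ?_⟩
  · -- part on (0, z₀)
    have hb : Measurable fun x : ℝ => ENNReal.ofReal (C / (x * L x)) :=
      (measurable_const.div (measurable_id.mul hLmeas)).ennreal_ofReal
    calc ∫⁻ x in Ioo (0:ℝ) z₀, ENNReal.ofReal (1 / x) *
          (⨆ y ∈ Ioc (0:ℝ) x, ENNReal.ofReal (1 / y) * F y)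
        ≤ ∫⁻ x in Ioo (0:ℝ) z₀, ENNReal.ofReal (C / (x * L x)) := by
          refine setLIntegral_mono hb fun x hx => ?_
          calc ENNReal.ofReal (1 / x) * (⨆ y ∈ Ioc (0:ℝ) x, ENNReal.ofReal (1 / y) * F y)
              ≤ ENNReal.ofReal (1 / x) * ENNReal.ofReal (C / L x) :=
                mul_le_mul_right (hS1 x hx.1 hx.2.le) _
            _ = ENNReal.ofReal (C / (x * L x)) := by
                rw [← ENNReal.ofReal_mul (one_div_nonneg.2 hx.1.le), div_mul_div_comm, one_mul]
      _ < ⊤ := hintOn.setLIntegral_lt_top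
  · -- part on [z₀, 1)
    calc ∫⁻ x in Ico z₀ (1:ℝ), ENNReal.ofReal (1 / x) *
          (⨆ y ∈ Ioc (0:ℝ) x, ENNReal.ofReal (1 / y) * F y)
        ≤ ∫⁻ _ in Ico z₀ (1:ℝ), ENNReal.ofReal (1 / z₀) * K := by
          refine setLIntegral_mono measurable_const fun x hx => ?_
          have hx0 : 0 < x := lt_of_lt_of_le hz0 hx.1
          exact mul_le_mul' (ENNReal.ofReal_le_ofReal (one_div_le_one_div_of_le hz0 hx.1))
            (hSK x hx0 hx.2)
      _ = ENNReal.ofReal (1 / z₀) * K * volume (Ico z₀ (1:ℝ)) := setLIntegral_const _ _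
      _ < ⊤ := by
          rw [Real.volume_Ico]
          exact ENNReal.mul_lt_top
            (ENNReal.mul_lt_top ENNReal.ofReal_lt_top hKfin) ENNReal.ofReal_lt_top
end

section
/- Let m be a locally finite nonnegative Borel measure on (0,∞), let f(x) = 1/x, and let f_*m be the pushforward of m by f. Then for all 0 < a < z < b < ∞ and every bounded Borel measurable function g : (0,∞) → ℝ, ∫_{(a,b)} ((min(z,y) − a)(b − max(z,y))/(b − a)) · (g(y)/y²) d(f_*m)(y) = z · ∫_{(1/b,1/a)} ((1/a − max(1/z, x)) · (min(x, 1/z) − 1/b)/(1/a − 1/b)) · x · g(1/x) dm(x). -/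
open MeasureTheory Set

theorem stmt7 (m : Measure ℝ) (hloc : ∀ x : ℝ, 0 < x → ∃ s ∈ nhds x, m s < ⊤)
    (a b z : ℝ) (ha : 0 < a) (haz : a < z) (hzb : z < b)
    (g : ℝ → ℝ) (hgm : Measurable g) (K : ℝ) (hgb : ∀ y : ℝ, |g y| ≤ K) :
    (∫ y in Ioo a b,
        (min z y - a) * (b - max z y) / (b - a) * (g y / y ^ 2)
          ∂(Measure.map (fun x => 1 / x) m)) =
      z * ∫ x in Ioo (1 / b) (1 / a),
        (1 / a - max (1 / z) x) * (min x (1 / z) - 1 / b) / (1 / a - 1 / b) *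
          (x * g (1 / x)) ∂m := by
  have hz : 0 < z := lt_trans ha haz
  have hb : 0 < b := lt_trans hz hzb
  have h1b : (0:ℝ) < 1 / b := by positivity
  have hf : AEMeasurable (fun x : ℝ => 1 / x) m :=
    (measurable_const.div measurable_id).aemeasurable
  have hgmeas : AEStronglyMeasurable
      (fun y : ℝ => (min z y - a) * (b - max z y) / (b - a) * (g y / y ^ 2))
      (Measure.map (fun x : ℝ => 1 / x) m) := by
    apply Measurable.aestronglyMeasurable
    exact (((measurable_const.min measurable_id).sub measurable_const).mul
      (measurable_const.sub (measurable_const.max measurable_id))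
      |>.div measurable_const).mul (hgm.div (measurable_id.pow measurable_const))
  rw [setIntegral_map measurableSet_Ioo hgmeas hf]
  have hpre : (fun x : ℝ => 1 / x) ⁻¹' Ioo a b = Ioo (1/b) (1/a) := by
    ext x
    simp only [mem_preimage, mem_Ioo]
    constructor
    · rintro ⟨h1, h2⟩
      have hx : 0 < x := by
        by_contra hx
        push_neg at hx
        have : 1 / x ≤ 0 := one_div_nonpos.mpr hx
        linarith
      constructor
      · rw [div_lt_iff₀ hb]
        nlinarith [(div_lt_iff₀ hx).mp h2]
      · rw [lt_div_iff₀ ha]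
        nlinarith [(lt_div_iff₀ hx).mp h1]
    · rintro ⟨h1, h2⟩
      have hx : 0 < x := lt_trans h1b h1
      constructor
      · rw [lt_div_iff₀ hx]
        nlinarith [(lt_div_iff₀ ha).mp h2]
      · rw [div_lt_iff₀ hx]
        nlinarith [(div_lt_iff₀ hb).mp h1]
  rw [hpre, ← integral_const_mul]
  apply setIntegral_congr_fun measurableSet_Ioo
  intro x hx
  have hx0 : 0 < x := lt_trans h1b hx.1
  have hxa : x ≠ 0 := ne_of_gt hx0
  have haz' : a ≠ 0 := ne_of_gt ha
  have hbz' : b ≠ 0 := ne_of_gt hb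
  have hzz' : z ≠ 0 := ne_of_gt hz
  have hba : b - a ≠ 0 := sub_ne_zero.mpr (by linarith)
  have hiab : 1/a - 1/b ≠ 0 := by
    have : 1/b < 1/a := by
      rw [div_lt_div_iff₀ hb ha]; linarith
    exact sub_ne_zero.mpr (ne_of_gt this)
  rcases le_total x (1/z) with h | h
  · have h' : z ≤ 1 / x := by
      rw [le_div_iff₀ hx0]
      nlinarith [(le_div_iff₀ hz).mp h]
    simp only [min_eq_left h', max_eq_right h', max_eq_left h, min_eq_left h]
    field_simp
  · have h' : 1 / x ≤ z := by
      rw [div_le_iff₀ hx0]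
      nlinarith [(div_le_iff₀ hz).mp h]
    simp only [min_eq_right h', max_eq_left h', max_eq_right h, min_eq_right h]
    field_simp
end

section
/- Let γ ∈ (0,π) satisfy cos γ = (γ/2) sin γ, set λ₀ = γ²/2, let m be the measure on (−1,1) equal to Lebesgue measure plus a unit Dirac mass at 0, and define h : (−1,1) → ℝ by h(x) = (γ/2) · sin( γ · min(1+x, 1−x) ). Then ∫_{(−1,1)} h dm = 1, and for every x ∈ (−1,1), h(x) = λ₀ · ∫_{(−1,1)} (min(x,y) + 1)(1 − max(x,y)) · h(y) dm(y). -/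
open MeasureTheory Set

set_option maxHeartbeats 1000000

lemma sin_prim (a b c d lo hi : ℝ) (hc : c ≠ 0) :
    ∫ y in lo..hi, (a * y + b) * Real.sin (c * y + d)
      = (-(a * hi + b) * Real.cos (c * hi + d) / c + a * Real.sin (c * hi + d) / c ^ 2)
        - (-(a * lo + b) * Real.cos (c * lo + d) / c + a * Real.sin (c * lo + d) / c ^ 2) := by
  have key : ∀ y : ℝ, HasDerivAt
      (fun y => -(a * y + b) * Real.cos (c * y + d) / c + a * Real.sin (c * y + d) / c ^ 2)
      ((a * y + b) * Real.sin (c * y + d)) y := by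
    intro y
    have h1 : HasDerivAt (fun y : ℝ => c * y + d) c y := by
      simpa using ((hasDerivAt_id y).const_mul c).add_const d
    have hs : HasDerivAt (fun y => Real.sin (c * y + d)) (Real.cos (c * y + d) * c) y :=
      (Real.hasDerivAt_sin _).comp y h1
    have hcc : HasDerivAt (fun y => Real.cos (c * y + d)) (-Real.sin (c * y + d) * c) y :=
      (Real.hasDerivAt_cos _).comp y h1
    have hlin : HasDerivAt (fun y : ℝ => -(a * y + b)) (-a) y := by
      exact ((((hasDerivAt_id y).const_mul a).add_const b).neg.congr_deriv (by simp))
    have := ((hlin.mul hcc).div_const c).add ((hs.const_mul a).div_const (c ^ 2))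
    refine this.congr_deriv ?_
    field_simp
    ring
  rw [intervalIntegral.integral_eq_sub_of_hasDerivAt (fun y _ => key y)]
  exact (Continuous.intervalIntegrable (by continuity) lo hi)

lemma total_integral (f : ℝ → ℝ) (hf : Continuous f) :
    ∫ y, f y ∂(volume.restrict (Ioo (-1 : ℝ) 1) + Measure.dirac 0)
      = (∫ y in (-1 : ℝ)..1, f y) + f 0 := by
  have hint1 : Integrable f (volume.restrict (Ioo (-1 : ℝ) 1)) :=
    (hf.integrableOn_Icc (a := -1) (b := 1)).mono_set Ioo_subset_Icc_self
  have hint2 : Integrable f (Measure.dirac (0 : ℝ)) :=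
    ⟨hf.aestronglyMeasurable, by simp [HasFiniteIntegral, lintegral_dirac]⟩
  rw [integral_add_measure hint1 hint2, integral_dirac]
  congr 1
  rw [intervalIntegral.integral_of_le (by norm_num : (-1:ℝ) ≤ 1), integral_Ioc_eq_integral_Ioo]

theorem stmt10 (γ : ℝ) (hγ : γ ∈ Ioo 0 Real.pi)
    (hroot : Real.cos γ = γ / 2 * Real.sin γ) :
    ((∫ x, γ / 2 * Real.sin (γ * min (1 + x) (1 - x))
        ∂(volume.restrict (Ioo (-1 : ℝ) 1) + Measure.dirac 0)) = 1) ∧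
    ∀ x ∈ Ioo (-1 : ℝ) 1,
      γ / 2 * Real.sin (γ * min (1 + x) (1 - x)) =
        γ ^ 2 / 2 *
          ∫ y, (min x y + 1) * (1 - max x y) * (γ / 2 * Real.sin (γ * min (1 + y) (1 - y)))
            ∂(volume.restrict (Ioo (-1 : ℝ) 1) + Measure.dirac 0) := by
  have hγ0 : γ ≠ 0 := ne_of_gt hγ.1
  have hγ0' : -γ ≠ 0 := by simpa using hγ0
  have hcontH : Continuous fun y : ℝ => γ / 2 * Real.sin (γ * min (1 + y) (1 - y)) :=
    continuous_const.mul (Real.continuous_sin.comp (continuous_const.mul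
      ((continuous_const.add continuous_id).min (continuous_const.sub continuous_id))))
  constructor
  · rw [total_integral _ hcontH]
    rw [← intervalIntegral.integral_add_adjacent_intervals (a := (-1:ℝ)) (b := 0) (c := 1)
      (hcontH.intervalIntegrable _ _) (hcontH.intervalIntegrable _ _)]
    have e1 : (∫ x in (-1:ℝ)..0, γ / 2 * Real.sin (γ * min (1 + x) (1 - x)))
        = ∫ x in (-1:ℝ)..0, (0 * x + γ / 2) * Real.sin (γ * x + γ) := by
      apply intervalIntegral.integral_congr
      intro y hy
      rw [Set.uIcc_of_le (by norm_num : (-1:ℝ) ≤ 0)] at hy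
      show γ / 2 * Real.sin (γ * min (1 + y) (1 - y)) = (0 * y + γ / 2) * Real.sin (γ * y + γ)
      rw [min_eq_left (by linarith [hy.1, hy.2] : (1:ℝ) + y ≤ 1 - y),
        show γ * (1 + y) = γ * y + γ by ring]
      ring
    have e2 : (∫ x in (0:ℝ)..1, γ / 2 * Real.sin (γ * min (1 + x) (1 - x)))
        = ∫ x in (0:ℝ)..1, (0 * x + γ / 2) * Real.sin (-γ * x + γ) := by
      apply intervalIntegral.integral_congr
      intro y hy
      rw [Set.uIcc_of_le (by norm_num : (0:ℝ) ≤ 1)] at hy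
      show γ / 2 * Real.sin (γ * min (1 + y) (1 - y)) = (0 * y + γ / 2) * Real.sin (-γ * y + γ)
      rw [min_eq_right (by linarith [hy.1, hy.2] : (1:ℝ) - y ≤ 1 + y),
        show γ * (1 - y) = -γ * y + γ by ring]
      ring
    rw [e1, e2, sin_prim 0 (γ/2) γ γ (-1) 0 hγ0, sin_prim 0 (γ/2) (-γ) γ 0 1 hγ0']
    norm_num
    rw [hroot]
    field_simp
    ring
  · intro x hx
    have hcontG : Continuous fun y : ℝ => (min x y + 1) * (1 - max x y) *
        (γ / 2 * Real.sin (γ * min (1 + y) (1 - y))) :=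
      (((continuous_const.min continuous_id).add continuous_const).mul
        (continuous_const.sub (continuous_const.max continuous_id))).mul hcontH
    rcases le_or_gt 0 x with hx0 | hx0
    · -- 0 ≤ x < 1
      rw [total_integral _ hcontG]
      rw [← intervalIntegral.integral_add_adjacent_intervals (a := (-1:ℝ)) (b := x) (c := 1)
        (hcontG.intervalIntegrable _ _) (hcontG.intervalIntegrable _ _),
        ← intervalIntegral.integral_add_adjacent_intervals (a := (-1:ℝ)) (b := 0) (c := x)
        (hcontG.intervalIntegrable _ _) (hcontG.intervalIntegrable _ _)]
      have e1 : (∫ y in (-1:ℝ)..0, (min x y + 1) * (1 - max x y) *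
            (γ / 2 * Real.sin (γ * min (1 + y) (1 - y))))
          = ∫ y in (-1:ℝ)..0, ((1-x)*(γ/2) * y + (1-x)*(γ/2)) * Real.sin (γ * y + γ) := by
        apply intervalIntegral.integral_congr
        intro y hy
        rw [Set.uIcc_of_le (by norm_num : (-1:ℝ) ≤ 0)] at hy
        show (min x y + 1) * (1 - max x y) * (γ / 2 * Real.sin (γ * min (1 + y) (1 - y)))
          = ((1-x)*(γ/2) * y + (1-x)*(γ/2)) * Real.sin (γ * y + γ)
        rw [min_eq_right (le_trans hy.2 hx0), max_eq_left (le_trans hy.2 hx0),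
          min_eq_left (by linarith [hy.1, hy.2] : (1:ℝ) + y ≤ 1 - y),
          show γ * (1 + y) = γ * y + γ by ring]
        ring
      have e2 : (∫ y in (0:ℝ)..x, (min x y + 1) * (1 - max x y) *
            (γ / 2 * Real.sin (γ * min (1 + y) (1 - y))))
          = ∫ y in (0:ℝ)..x, ((1-x)*(γ/2) * y + (1-x)*(γ/2)) * Real.sin (-γ * y + γ) := by
        apply intervalIntegral.integral_congr
        intro y hy
        rw [Set.uIcc_of_le hx0] at hy
        show (min x y + 1) * (1 - max x y) * (γ / 2 * Real.sin (γ * min (1 + y) (1 - y)))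
          = ((1-x)*(γ/2) * y + (1-x)*(γ/2)) * Real.sin (-γ * y + γ)
        rw [min_eq_right hy.2, max_eq_left hy.2,
          min_eq_right (by linarith [hy.1] : (1:ℝ) - y ≤ 1 + y),
          show γ * (1 - y) = -γ * y + γ by ring]
        ring
      have e3 : (∫ y in x..1, (min x y + 1) * (1 - max x y) *
            (γ / 2 * Real.sin (γ * min (1 + y) (1 - y))))
          = ∫ y in x..1, (-((x+1)*(γ/2)) * y + (x+1)*(γ/2)) * Real.sin (-γ * y + γ) := by
        apply intervalIntegral.integral_congr
        intro y hy
        rw [Set.uIcc_of_le (le_of_lt hx.2)] at hy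
        show (min x y + 1) * (1 - max x y) * (γ / 2 * Real.sin (γ * min (1 + y) (1 - y)))
          = (-((x+1)*(γ/2)) * y + (x+1)*(γ/2)) * Real.sin (-γ * y + γ)
        rw [min_eq_left hy.1, max_eq_right hy.1,
          min_eq_right (by linarith [le_trans hx0 hy.1] : (1:ℝ) - y ≤ 1 + y),
          show γ * (1 - y) = -γ * y + γ by ring]
        ring
      rw [e1, e2, e3, sin_prim _ _ _ _ _ _ hγ0, sin_prim _ _ _ _ _ _ hγ0',
        sin_prim _ _ _ _ _ _ hγ0']
      rw [min_eq_right hx0, max_eq_left hx0,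
        min_eq_right (by linarith [hx0] : (1:ℝ) - x ≤ 1 + x)]
      norm_num
      rw [show -(γ * x) + γ = γ * (1 - x) by ring]
      rw [hroot]
      field_simp
      ring
    · -- -1 < x < 0
      rw [total_integral _ hcontG]
      rw [← intervalIntegral.integral_add_adjacent_intervals (a := (-1:ℝ)) (b := 0) (c := 1)
        (hcontG.intervalIntegrable _ _) (hcontG.intervalIntegrable _ _),
        ← intervalIntegral.integral_add_adjacent_intervals (a := (-1:ℝ)) (b := x) (c := 0)
        (hcontG.intervalIntegrable _ _) (hcontG.intervalIntegrable _ _)]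
      have e1 : (∫ y in (-1:ℝ)..x, (min x y + 1) * (1 - max x y) *
            (γ / 2 * Real.sin (γ * min (1 + y) (1 - y))))
          = ∫ y in (-1:ℝ)..x, ((1-x)*(γ/2) * y + (1-x)*(γ/2)) * Real.sin (γ * y + γ) := by
        apply intervalIntegral.integral_congr
        intro y hy
        rw [Set.uIcc_of_le (le_of_lt hx.1)] at hy
        show (min x y + 1) * (1 - max x y) * (γ / 2 * Real.sin (γ * min (1 + y) (1 - y)))
          = ((1-x)*(γ/2) * y + (1-x)*(γ/2)) * Real.sin (γ * y + γ)
        rw [min_eq_right hy.2, max_eq_left hy.2,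
          min_eq_left (by linarith [hy.1, le_trans hy.2 (le_of_lt hx0)] : (1:ℝ) + y ≤ 1 - y),
          show γ * (1 + y) = γ * y + γ by ring]
        ring
      have e2 : (∫ y in x..(0:ℝ), (min x y + 1) * (1 - max x y) *
            (γ / 2 * Real.sin (γ * min (1 + y) (1 - y))))
          = ∫ y in x..(0:ℝ), (-((x+1)*(γ/2)) * y + (x+1)*(γ/2)) * Real.sin (γ * y + γ) := by
        apply intervalIntegral.integral_congr
        intro y hy
        rw [Set.uIcc_of_le (le_of_lt hx0)] at hy
        show (min x y + 1) * (1 - max x y) * (γ / 2 * Real.sin (γ * min (1 + y) (1 - y)))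
          = (-((x+1)*(γ/2)) * y + (x+1)*(γ/2)) * Real.sin (γ * y + γ)
        rw [min_eq_left hy.1, max_eq_right hy.1,
          min_eq_left (by linarith [hy.2] : (1:ℝ) + y ≤ 1 - y),
          show γ * (1 + y) = γ * y + γ by ring]
        ring
      have e3 : (∫ y in (0:ℝ)..1, (min x y + 1) * (1 - max x y) *
            (γ / 2 * Real.sin (γ * min (1 + y) (1 - y))))
          = ∫ y in (0:ℝ)..1, (-((x+1)*(γ/2)) * y + (x+1)*(γ/2)) * Real.sin (-γ * y + γ) := by
        apply intervalIntegral.integral_congr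
        intro y hy
        rw [Set.uIcc_of_le (by norm_num : (0:ℝ) ≤ 1)] at hy
        show (min x y + 1) * (1 - max x y) * (γ / 2 * Real.sin (γ * min (1 + y) (1 - y)))
          = (-((x+1)*(γ/2)) * y + (x+1)*(γ/2)) * Real.sin (-γ * y + γ)
        rw [min_eq_left (le_trans (le_of_lt hx0) hy.1),
          max_eq_right (le_trans (le_of_lt hx0) hy.1),
          min_eq_right (by linarith [hy.1] : (1:ℝ) - y ≤ 1 + y),
          show γ * (1 - y) = -γ * y + γ by ring]
        ring
      rw [e1, e2, e3, sin_prim _ _ _ _ _ _ hγ0, sin_prim _ _ _ _ _ _ hγ0,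
        sin_prim _ _ _ _ _ _ hγ0']
      rw [min_eq_left (le_of_lt hx0), max_eq_right (le_of_lt hx0),
        min_eq_left (by linarith [le_of_lt hx0] : (1:ℝ) + x ≤ 1 - x)]
      norm_num
      rw [show γ * x + γ = γ * (1 + x) by ring]
      rw [hroot]
      field_simp
      ring
end

section
/- Let γ ∈ (0,π], a ≥ 0, b ≥ 0, let m be the measure on (−1,1) equal to Lebesgue measure plus a unit Dirac mass at 0, and define g : (−1,1) → ℝ by g(0) = a and g(x) = b · sin( γ · min(1+x, 1−x) ) for x ≠ 0. Suppose that ∫_{(−1,1)} g dm = 1 and that for every x ∈ (−1,1), g(x) = (γ²/2) · ∫_{(−1,1)} (min(x,y) + 1)(1 − max(x,y)) · g(y) dm(y). Then cos γ = (γ/2) sin γ, b = γ/2, and a = (γ sin γ)/2. -/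
open MeasureTheory Set intervalIntegral Real

-- every function is integrable wrt dirac
lemma st11_integrable_dirac (f : ℝ → ℝ) : Integrable f (Measure.dirac 0) := by
  have h : f =ᵐ[Measure.dirac (0:ℝ)] fun _ => f 0 := by
    rw [MeasureTheory.ae_dirac_eq]
    exact Filter.eventually_pure.2 rfl
  exact (integrable_const (f 0)).congr h.symm

-- split measure integral
lemma st11_split (f G : ℝ → ℝ) (hG : Continuous G)
    (hfG : ∀ x ∈ Ioo (-1:ℝ) 1, x ≠ 0 → f x = G x) :
    ∫ x, f x ∂(volume.restrict (Ioo (-1 : ℝ) 1) + Measure.dirac 0)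
      = (∫ x in (-1:ℝ)..1, G x) + f 0 := by
  have hae : f =ᵐ[volume.restrict (Ioo (-1:ℝ) 1)] G := by
    have h1 : ∀ᵐ x ∂(volume.restrict (Ioo (-1:ℝ) 1)), x ∈ Ioo (-1:ℝ) 1 :=
      ae_restrict_mem measurableSet_Ioo
    have h2 : ∀ᵐ x ∂(volume.restrict (Ioo (-1:ℝ) 1)), x ≠ 0 := by
      refine ae_iff.2 ?_
      have : {x : ℝ | ¬ x ≠ 0} = {0} := by ext x; simp
      rw [this, Measure.restrict_apply (measurableSet_singleton 0)]
      exact measure_mono_null (inter_subset_left) (Real.volume_singleton)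
    filter_upwards [h1, h2] with x hx hx0
    exact hfG x hx hx0
  have hint1 : Integrable f (volume.restrict (Ioo (-1:ℝ) 1)) := by
    refine (Integrable.congr ?_ hae.symm)
    exact (hG.integrableOn_Icc).mono_set Ioo_subset_Icc_self
  rw [integral_add_measure hint1 (st11_integrable_dirac f), integral_dirac,
    integral_congr_ae hae, intervalIntegral.integral_of_le (by norm_num : (-1:ℝ) ≤ 1),
    MeasureTheory.integral_Ioc_eq_integral_Ioo]

-- L1 : ∫_{-1}^0 sin(γ(1+y)) = (1-cos γ)/γ
lemma st11_L1 {γ : ℝ} (hγ : γ ≠ 0) :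
    ∫ y in (-1:ℝ)..0, Real.sin (γ*(1+y)) = (1 - Real.cos γ)/γ := by
  have key : ∀ y : ℝ, HasDerivAt (fun t => -Real.cos (γ*(1+t))/γ) (Real.sin (γ*(1+y))) y := by
    intro y
    have h1 : HasDerivAt (fun t : ℝ => γ*(1+t)) (γ*1) y :=
      ((hasDerivAt_id y).const_add 1).const_mul γ
    have h2 := ((Real.hasDerivAt_cos (γ*(1+y))).comp y h1).neg.div_const γ
    convert h2 using 1
    any_goals rfl
    field_simp
  rw [integral_eq_sub_of_hasDerivAt (fun y _ => key y)
    ((Real.continuous_sin.comp (by continuity)).intervalIntegrable _ _)]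
  norm_num
  ring

-- L2 : ∫_0^1 sin(γ(1-y)) = (1-cos γ)/γ
lemma st11_L2 {γ : ℝ} (hγ : γ ≠ 0) :
    ∫ y in (0:ℝ)..1, Real.sin (γ*(1-y)) = (1 - Real.cos γ)/γ := by
  have key : ∀ y : ℝ, HasDerivAt (fun t => Real.cos (γ*(1-t))/γ) (Real.sin (γ*(1-y))) y := by
    intro y
    have h1 : HasDerivAt (fun t : ℝ => γ*(1-t)) (γ*(-1)) y := by
      simpa using ((hasDerivAt_id y).const_sub 1).const_mul γ
    have h2 := ((Real.hasDerivAt_cos (γ*(1-y))).comp y h1).div_const γ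
    convert h2 using 1
    any_goals rfl
    field_simp
  rw [integral_eq_sub_of_hasDerivAt (fun y _ => key y)
    ((Real.continuous_sin.comp (by continuity)).intervalIntegrable _ _)]
  norm_num
  ring

-- L3 : ∫_{-1}^0 (1+y) sin(γ(1+y)) = (sin γ - γ cos γ)/γ²
lemma st11_L3 {γ : ℝ} (hγ : γ ≠ 0) :
    ∫ y in (-1:ℝ)..0, (1+y) * Real.sin (γ*(1+y))
      = (Real.sin γ - γ * Real.cos γ)/γ^2 := by
  have key : ∀ y : ℝ, HasDerivAt
      (fun t => (Real.sin (γ*(1+t)) - γ*(1+t)*Real.cos (γ*(1+t)))/γ^2)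
      ((1+y) * Real.sin (γ*(1+y))) y := by
    intro y
    have h1 : HasDerivAt (fun t : ℝ => γ*(1+t)) (γ*1) y :=
      ((hasDerivAt_id y).const_add 1).const_mul γ
    have hs := (Real.hasDerivAt_sin (γ*(1+y))).comp y h1
    have hc := (Real.hasDerivAt_cos (γ*(1+y))).comp y h1
    have h2 := ((hs.sub (h1.mul hc)).div_const (γ^2))
    convert h2 using 1
    any_goals rfl
    simp only [Function.comp_apply]
    field_simp
    ring
  rw [integral_eq_sub_of_hasDerivAt (fun y _ => key y)
    ((continuous_const.add continuous_id).mul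
      (Real.continuous_sin.comp (by continuity)) |>.intervalIntegrable _ _)]
  norm_num

-- L4a : ∫_0^1 (1-y) sin(γ(1-y)) = (sin γ - γ cos γ)/γ²
lemma st11_L4a {γ : ℝ} (hγ : γ ≠ 0) :
    ∫ y in (0:ℝ)..1, (1-y) * Real.sin (γ*(1-y))
      = (Real.sin γ - γ * Real.cos γ)/γ^2 := by
  have key : ∀ y : ℝ, HasDerivAt
      (fun t => (γ*(1-t)*Real.cos (γ*(1-t)) - Real.sin (γ*(1-t)))/γ^2)
      ((1-y) * Real.sin (γ*(1-y))) y := by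
    intro y
    have h1 : HasDerivAt (fun t : ℝ => γ*(1-t)) (γ*(-1)) y := by
      simpa using ((hasDerivAt_id y).const_sub 1).const_mul γ
    have hs := (Real.hasDerivAt_sin (γ*(1-y))).comp y h1
    have hc := (Real.hasDerivAt_cos (γ*(1-y))).comp y h1
    have h2 := (((h1.mul hc).sub hs).div_const (γ^2))
    convert h2 using 1
    any_goals rfl
    simp only [Function.comp_apply]
    field_simp
    ring
  rw [integral_eq_sub_of_hasDerivAt (fun y _ => key y)
    ((continuous_const.sub continuous_id).mul
      (Real.continuous_sin.comp (by continuity)) |>.intervalIntegrable _ _)]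
  norm_num
  ring

-- L4b : ∫_{1/2}^1 (1-y) sin(γ(1-y)) = (sin(γ/2) - (γ/2) cos(γ/2))/γ²
lemma st11_L4b {γ : ℝ} (hγ : γ ≠ 0) :
    ∫ y in (1/2:ℝ)..1, (1-y) * Real.sin (γ*(1-y))
      = (Real.sin (γ/2) - γ/2 * Real.cos (γ/2))/γ^2 := by
  have key : ∀ y : ℝ, HasDerivAt
      (fun t => (γ*(1-t)*Real.cos (γ*(1-t)) - Real.sin (γ*(1-t)))/γ^2)
      ((1-y) * Real.sin (γ*(1-y))) y := by
    intro y
    have h1 : HasDerivAt (fun t : ℝ => γ*(1-t)) (γ*(-1)) y := by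
      simpa using ((hasDerivAt_id y).const_sub 1).const_mul γ
    have hs := (Real.hasDerivAt_sin (γ*(1-y))).comp y h1
    have hc := (Real.hasDerivAt_cos (γ*(1-y))).comp y h1
    have h2 := (((h1.mul hc).sub hs).div_const (γ^2))
    convert h2 using 1
    any_goals rfl
    simp only [Function.comp_apply]
    field_simp
    ring
  rw [integral_eq_sub_of_hasDerivAt (fun y _ => key y)
    ((continuous_const.sub continuous_id).mul
      (Real.continuous_sin.comp (by continuity)) |>.intervalIntegrable _ _)]
  norm_num
  rw [show γ * (1/2 : ℝ) = γ/2 by ring]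
  ring

-- L5 : ∫_0^{1/2} (1+y) sin(γ(1-y)) = (3/2)cos(γ/2)/γ + sin(γ/2)/γ² - cos γ/γ - sin γ/γ²
lemma st11_L5 {γ : ℝ} (hγ : γ ≠ 0) :
    ∫ y in (0:ℝ)..(1/2), (1+y) * Real.sin (γ*(1-y))
      = 3/2 * Real.cos (γ/2)/γ + Real.sin (γ/2)/γ^2
        - Real.cos γ/γ - Real.sin γ/γ^2 := by
  have key : ∀ y : ℝ, HasDerivAt
      (fun t => (1+t)*Real.cos (γ*(1-t))/γ + Real.sin (γ*(1-t))/γ^2)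
      ((1+y) * Real.sin (γ*(1-y))) y := by
    intro y
    have h1 : HasDerivAt (fun t : ℝ => γ*(1-t)) (γ*(-1)) y := by
      simpa using ((hasDerivAt_id y).const_sub 1).const_mul γ
    have h0 : HasDerivAt (fun t : ℝ => 1+t) 1 y := (hasDerivAt_id y).const_add 1
    have hs := (Real.hasDerivAt_sin (γ*(1-y))).comp y h1
    have hc := (Real.hasDerivAt_cos (γ*(1-y))).comp y h1
    have h2 := ((h0.mul hc).div_const γ).add (hs.div_const (γ^2))
    convert h2 using 1
    any_goals rfl
    simp only [Function.comp_apply]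
    field_simp
    ring
  rw [integral_eq_sub_of_hasDerivAt (fun y _ => key y)
    ((continuous_const.add continuous_id).mul
      (Real.continuous_sin.comp (by continuity)) |>.intervalIntegrable _ _)]
  norm_num
  rw [show γ * (1/2 : ℝ) = γ/2 by ring]
  ring

lemma st11_Nint {γ b : ℝ} (hγ : γ ≠ 0) :
    ∫ y in (-1:ℝ)..1, b * Real.sin (γ * min (1+y) (1-y))
      = 2*b*(1-Real.cos γ)/γ := by
  have hc : Continuous fun y : ℝ => b * Real.sin (γ * min (1+y) (1-y)) := by continuity
  rw [← integral_add_adjacent_intervals (a := (-1:ℝ)) (b := 0) (c := 1)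
    (hc.intervalIntegrable _ _) (hc.intervalIntegrable _ _)]
  have h1 : EqOn (fun y : ℝ => b * Real.sin (γ * min (1+y) (1-y)))
      (fun y : ℝ => b * Real.sin (γ * (1+y))) (uIcc (-1:ℝ) 0) := by
    intro y hy
    rw [uIcc_of_le (by norm_num)] at hy
    simp only
    rw [min_eq_left (by linarith [hy.1, hy.2] : (1:ℝ)+y ≤ 1-y)]
  have h2 : EqOn (fun y : ℝ => b * Real.sin (γ * min (1+y) (1-y)))
      (fun y : ℝ => b * Real.sin (γ * (1-y))) (uIcc (0:ℝ) 1) := by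
    intro y hy
    rw [uIcc_of_le (by norm_num)] at hy
    simp only
    rw [min_eq_right (by linarith [hy.1, hy.2] : (1:ℝ)-y ≤ 1+y)]
  rw [integral_congr h1, integral_congr h2, intervalIntegral.integral_const_mul, intervalIntegral.integral_const_mul,
    st11_L1 hγ, st11_L2 hγ]
  field_simp
  ring

lemma st11_E0int {γ b : ℝ} (hγ : γ ≠ 0) :
    ∫ y in (-1:ℝ)..1, (min 0 y + 1) * (1 - max 0 y) * (b * Real.sin (γ * min (1+y) (1-y)))
      = 2*b*(Real.sin γ - γ*Real.cos γ)/γ^2 := by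
  have hc : Continuous fun y : ℝ =>
      (min 0 y + 1) * (1 - max 0 y) * (b * Real.sin (γ * min (1+y) (1-y))) :=
    (((continuous_const.min continuous_id).add continuous_const).mul
      (continuous_const.sub (continuous_const.max continuous_id))).mul
      (continuous_const.mul (Real.continuous_sin.comp
        (continuous_const.mul ((continuous_const.add continuous_id).min
          (continuous_const.sub continuous_id)))))
  rw [← integral_add_adjacent_intervals (a := (-1:ℝ)) (b := 0) (c := 1)
    (hc.intervalIntegrable _ _) (hc.intervalIntegrable _ _)]
  have h1 : EqOn (fun y : ℝ => (min 0 y + 1) * (1 - max 0 y) * (b * Real.sin (γ * min (1+y) (1-y))))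
      (fun y : ℝ => b * ((1+y) * Real.sin (γ * (1+y)))) (uIcc (-1:ℝ) 0) := by
    intro y hy
    rw [uIcc_of_le (by norm_num)] at hy
    simp only
    rw [min_eq_left (by linarith [hy.1, hy.2] : (1:ℝ)+y ≤ 1-y),
      min_eq_right hy.2, max_eq_left hy.2]
    ring
  have h2 : EqOn (fun y : ℝ => (min 0 y + 1) * (1 - max 0 y) * (b * Real.sin (γ * min (1+y) (1-y))))
      (fun y : ℝ => b * ((1-y) * Real.sin (γ * (1-y)))) (uIcc (0:ℝ) 1) := by
    intro y hy
    rw [uIcc_of_le (by norm_num)] at hy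
    simp only
    rw [min_eq_right (by linarith [hy.1, hy.2] : (1:ℝ)-y ≤ 1+y),
      min_eq_left hy.1, max_eq_right hy.1]
    ring
  rw [integral_congr h1, integral_congr h2, intervalIntegral.integral_const_mul, intervalIntegral.integral_const_mul,
    st11_L3 hγ, st11_L4a hγ]
  field_simp
  ring

lemma st11_Ehint {γ b : ℝ} (hγ : γ ≠ 0) :
    ∫ y in (-1:ℝ)..1, (min (1/2) y + 1) * (1 - max (1/2) y) * (b * Real.sin (γ * min (1+y) (1-y)))
      = (2*b*Real.sin (γ/2) - b*γ*Real.cos γ)/γ^2 := by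
  have hc : Continuous fun y : ℝ =>
      (min (1/2) y + 1) * (1 - max (1/2) y) * (b * Real.sin (γ * min (1+y) (1-y))) :=
    (((continuous_const.min continuous_id).add continuous_const).mul
      (continuous_const.sub (continuous_const.max continuous_id))).mul
      (continuous_const.mul (Real.continuous_sin.comp
        (continuous_const.mul ((continuous_const.add continuous_id).min
          (continuous_const.sub continuous_id)))))
  rw [← integral_add_adjacent_intervals (a := (-1:ℝ)) (b := 1/2) (c := 1)
    (hc.intervalIntegrable _ _) (hc.intervalIntegrable _ _),
    ← integral_add_adjacent_intervals (a := (-1:ℝ)) (b := 0) (c := 1/2)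
    (hc.intervalIntegrable _ _) (hc.intervalIntegrable _ _)]
  have h1 : EqOn (fun y : ℝ => (min (1/2) y + 1) * (1 - max (1/2) y) * (b * Real.sin (γ * min (1+y) (1-y))))
      (fun y : ℝ => b/2 * ((1+y) * Real.sin (γ * (1+y)))) (uIcc (-1:ℝ) 0) := by
    intro y hy
    rw [uIcc_of_le (by norm_num)] at hy
    simp only
    rw [min_eq_left (by linarith [hy.1, hy.2] : (1:ℝ)+y ≤ 1-y),
      min_eq_right (by linarith [hy.2] : y ≤ (1/2:ℝ)),
      max_eq_left (by linarith [hy.2] : y ≤ (1/2:ℝ))]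
    ring
  have h2 : EqOn (fun y : ℝ => (min (1/2) y + 1) * (1 - max (1/2) y) * (b * Real.sin (γ * min (1+y) (1-y))))
      (fun y : ℝ => b/2 * ((1+y) * Real.sin (γ * (1-y)))) (uIcc (0:ℝ) (1/2)) := by
    intro y hy
    rw [uIcc_of_le (by norm_num)] at hy
    simp only
    rw [min_eq_right (by linarith [hy.1, hy.2] : (1:ℝ)-y ≤ 1+y),
      min_eq_right hy.2, max_eq_left hy.2]
    ring
  have h3 : EqOn (fun y : ℝ => (min (1/2) y + 1) * (1 - max (1/2) y) * (b * Real.sin (γ * min (1+y) (1-y))))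
      (fun y : ℝ => 3*b/2 * ((1-y) * Real.sin (γ * (1-y)))) (uIcc ((1/2):ℝ) 1) := by
    intro y hy
    rw [uIcc_of_le (by norm_num)] at hy
    simp only
    rw [min_eq_right (by linarith [hy.1, hy.2] : (1:ℝ)-y ≤ 1+y),
      min_eq_left hy.1, max_eq_right hy.1]
    ring
  rw [integral_congr h1, integral_congr h2, integral_congr h3,
    intervalIntegral.integral_const_mul, intervalIntegral.integral_const_mul, intervalIntegral.integral_const_mul,
    st11_L3 hγ, st11_L5 hγ, st11_L4b hγ]
  field_simp
  ring

theorem stmt11 (γ a b : ℝ) (hγ : γ ∈ Ioc 0 Real.pi) (ha : 0 ≤ a) (hb : 0 ≤ b)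
    (g : ℝ → ℝ) (hg0 : g 0 = a)
    (hgx : ∀ x ∈ Ioo (-1 : ℝ) 1, x ≠ 0 → g x = b * Real.sin (γ * min (1 + x) (1 - x)))
    (hnorm : (∫ x, g x ∂(volume.restrict (Ioo (-1 : ℝ) 1) + Measure.dirac 0)) = 1)
    (hfix : ∀ x ∈ Ioo (-1 : ℝ) 1,
      g x = γ ^ 2 / 2 *
        ∫ y, (min x y + 1) * (1 - max x y) * g y
          ∂(volume.restrict (Ioo (-1 : ℝ) 1) + Measure.dirac 0)) :
    Real.cos γ = γ / 2 * Real.sin γ ∧ b = γ / 2 ∧ a = γ * Real.sin γ / 2 := by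
  obtain ⟨hγ0, hγπ⟩ := hγ
  have hγne : γ ≠ 0 := ne_of_gt hγ0
  have hGc : Continuous fun y : ℝ => b * Real.sin (γ * min (1+y) (1-y)) :=
    continuous_const.mul (Real.continuous_sin.comp
      (continuous_const.mul ((continuous_const.add continuous_id).min
        (continuous_const.sub continuous_id))))
  -- Equation 1 : normalization
  have e1 : 2*b*(1-Real.cos γ)/γ + a = 1 := by
    rw [st11_split g (fun y => b * Real.sin (γ * min (1+y) (1-y))) hGc hgx,
      st11_Nint hγne, hg0] at hnorm
    exact hnorm
  -- Equation 2 : fixed point at 0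
  have e2 : a = γ^2/2 * (2*b*(Real.sin γ - γ*Real.cos γ)/γ^2 + a) := by
    have h := hfix 0 (by norm_num)
    rw [st11_split (fun y => (min 0 y + 1) * (1 - max 0 y) * g y)
      (fun y => (min 0 y + 1) * (1 - max 0 y) * (b * Real.sin (γ * min (1+y) (1-y))))
      ((((continuous_const.min continuous_id).add continuous_const).mul
        (continuous_const.sub (continuous_const.max continuous_id))).mul hGc)
      (fun y hy hy0 => by simp only [hgx y hy hy0]) ] at h
    rw [st11_E0int hγne] at h
    simpa [hg0] using h
  -- Equation 3 : fixed point at 1/2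
  have e3 : b * Real.sin (γ/2)
      = γ^2/2 * ((2*b*Real.sin (γ/2) - b*γ*Real.cos γ)/γ^2 + 1/2 * a) := by
    have h := hfix (1/2) (by norm_num)
    rw [st11_split (fun y => (min (1/2) y + 1) * (1 - max (1/2) y) * g y)
      (fun y => (min (1/2) y + 1) * (1 - max (1/2) y) * (b * Real.sin (γ * min (1+y) (1-y))))
      ((((continuous_const.min continuous_id).add continuous_const).mul
        (continuous_const.sub (continuous_const.max continuous_id))).mul hGc)
      (fun y hy hy0 => by simp only [hgx y hy hy0]) ] at h
    rw [st11_Ehint hγne, hgx (1/2) (by norm_num) (by norm_num)] at h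
    rw [show min (1+(1/2:ℝ)) (1-(1/2)) = 1/2 by norm_num,
      show γ * (1/2:ℝ) = γ/2 by ring] at h
    rw [h, hg0]
    have hmm : min (1/2:ℝ) 0 = 0 := by norm_num
    have hmx : max (1/2:ℝ) 0 = 1/2 := by norm_num
    rw [hmm, hmx]
    ring
  -- derive algebraic relations
  have k3 : a * γ = 2 * b * Real.cos γ := by
    have hr : γ^2/2 * ((2*b*Real.sin (γ/2) - b*γ*Real.cos γ)/γ^2 + 1/2 * a)
        = b*Real.sin (γ/2) - b*γ*Real.cos γ/2 + a*γ^2/4 := by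
      field_simp
      ring
    rw [hr] at e3
    have h2 : a*γ*γ = (2*b*Real.cos γ)*γ := by nlinarith [e3]
    exact mul_right_cancel₀ hγne h2
  have k2 : a = b * Real.sin γ := by
    have hr : γ^2/2 * (2*b*(Real.sin γ - γ*Real.cos γ)/γ^2 + a)
        = b*Real.sin γ - b*γ*Real.cos γ + a*γ^2/2 := by
      field_simp
    rw [hr] at e2
    have k3' : a*γ*γ = 2*b*Real.cos γ*γ := by rw [k3]
    nlinarith [e2, k3']
  have kb : b = γ / 2 := by
    have h1 : 2*b*(1-Real.cos γ) + a*γ = γ := by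
      have h2 : (2*b*(1-Real.cos γ)/γ + a) * γ = 1 * γ := by rw [e1]
      field_simp at h2
      linarith
    nlinarith [h1, k3]
  have hcos : Real.cos γ = γ / 2 * Real.sin γ := by
    have : a * γ = γ * Real.cos γ := by rw [k3, kb]; ring
    have ha' : a = Real.cos γ := by
      have h2 : a*γ = Real.cos γ*γ := by linarith
      exact mul_right_cancel₀ hγne h2
    rw [← ha', k2, kb]
  exact ⟨hcos, kb, by rw [k2, kb]; ring⟩
end
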